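/- arXiv:2312.01819 — 2 statements merged into one kernel-verified Lean document; each statement's English description precedes it below -/
import Mathlib

section
/- For every positive integer k and every t > 0, ∂^k ĥ₂(p(·,t))/∂t^k = (−1)^{k−1} · ∫_ℝ p_k(x,t)² dx, where ĥ₂(p(·,t)) = −(∫ p(x,t)² dx − 1) is the Tsallis entropy of order 2. Consequently, (−1)^{k−1} · ∂^k ĥ₂(p(·,t))/∂t^k ≥ 0 for every positive integer k and every t > 0; i.e., the complete monotonicity property holds for the Tsallis entropy of order 2 along the heat flow. -/
open MeasureTheory Real Filter
open scoped Classical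

/-- The density `p(x,t)` of `X + √t Z` along the heat flow. -/
noncomputable def heatP (f : ℝ → ℝ) (t x : ℝ) : ℝ :=
  ∫ y : ℝ, f y * ((Real.sqrt (2 * Real.pi * t))⁻¹ * Real.exp (-(x - y) ^ 2 / (2 * t)))

/-- `p_k(x,t) = ∂^k p / ∂x^k`. -/
noncomputable def pk (f : ℝ → ℝ) (k : ℕ) (t x : ℝ) : ℝ :=
  iteratedDeriv k (heatP f t) x

/-- `p̄_i = p_i / p`. -/
noncomputable def pbar (f : ℝ → ℝ) (i : ℕ) (t x : ℝ) : ℝ :=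
  pk f i t x / heatP f t x

/-- The Rényi entropy `h_α(p(·,t))`, with the Shannon entropy at `α = 1`. -/
noncomputable def renyiEnt (f : ℝ → ℝ) (α t : ℝ) : ℝ :=
  if α = 1 then -∫ x : ℝ, heatP f t x * Real.log (heatP f t x)
  else (1 - α)⁻¹ * Real.log (∫ x : ℝ, heatP f t x ^ α)

/-- Finiteness `|h_α(p(·,t))| < ∞` of the Rényi entropy at time `t`. -/
def renyiFinite (f : ℝ → ℝ) (α t : ℝ) : Prop :=
  if α = 1 then Integrable (fun x : ℝ => heatP f t x * Real.log (heatP f t x))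
  else Integrable (fun x : ℝ => heatP f t x ^ α) ∧ 0 < ∫ x : ℝ, heatP f t x ^ α

/-- `t < t_α` where `t_α = sup { s > 0 : |h_α(p(·,s))| < ∞ }`. -/
def ltTalpha (f : ℝ → ℝ) (α t : ℝ) : Prop :=
  ∃ s : ℝ, t < s ∧ 0 < s ∧ renyiFinite f α s

/-- The tilted expectation `E_α[g] = (∫ g p^α) / (∫ p^α)`. -/
noncomputable def Ea (f : ℝ → ℝ) (α t : ℝ) (g : ℝ → ℝ) : ℝ :=
  (∫ x : ℝ, g x * heatP f t x ^ α) / (∫ x : ℝ, heatP f t x ^ α)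

/-- The Tsallis entropy along the heat flow, Shannon entropy at order 1. -/
noncomputable def tsallisEnt (f : ℝ → ℝ) (α t : ℝ) : ℝ :=
  if α = 1 then -∫ x : ℝ, heatP f t x * Real.log (heatP f t x)
  else (1 - α)⁻¹ * ((∫ x : ℝ, heatP f t x ^ α) - 1)


open Polynomial

noncomputable section
namespace HeatCM

/-- Bivariate polynomials: outer variable `w`, inner variable `τ = s^{-1/2}`. -/
abbrev A2 : Type := Polynomial (Polynomial ℝ)

/-- Derivative in the inner variable `τ`. -/
def Dt (q : A2) : A2 := q.sum fun n a => C (derivative a) * X ^ n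

lemma coeff_Dt (q : A2) (n : ℕ) : (Dt q).coeff n = derivative (q.coeff n) := by
  rw [Dt, Polynomial.sum_def, finset_sum_coeff]
  simp only [coeff_C_mul, coeff_X_pow, mul_ite, mul_one, mul_zero]
  rw [Finset.sum_ite_eq q.support n (fun m => derivative (q.coeff m))]
  by_cases h : n ∈ q.support
  · simp [h]
  · simp [h, Polynomial.notMem_support_iff.mp h]

lemma Dt_add (p q : A2) : Dt (p + q) = Dt p + Dt q := by
  ext n; simp [coeff_Dt, coeff_add]

lemma Dt_sub (p q : A2) : Dt (p - q) = Dt p - Dt q := by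
  ext n; simp [coeff_Dt, coeff_sub]

lemma Dt_C_mul (a : Polynomial ℝ) (q : A2) :
    Dt (C a * q) = C (derivative a) * q + C a * Dt q := by
  ext n; simp [coeff_Dt, coeff_C_mul, coeff_add, derivative_mul]

lemma Dt_X_mul (q : A2) : Dt (X * q) = X * Dt q := by
  ext n
  cases n with
  | zero => simp [coeff_Dt, Polynomial.mul_coeff_zero]
  | succ m => simp [coeff_Dt, Polynomial.coeff_X_mul]

lemma Dt_derivative (q : A2) : Dt (derivative q) = derivative (Dt q) := by
  ext n
  simp only [coeff_Dt, coeff_derivative, derivative_mul]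
  simp

/-- τ as an element of A2. -/
def Ct : A2 := C X

lemma derivative_Ct_pow (k : ℕ) : derivative ((Ct : A2) ^ k) = 0 := by
  rw [derivative_pow]; simp [Ct]

lemma derivative_Ct : derivative (Ct : A2) = 0 := by simp [Ct]

/-- The operator `∂_w` acting on `q·e^{-w²/(2s)}` representations. -/
def Dw (q : A2) : A2 := derivative q - X * Ct ^ 2 * q

/-- The operator `2·∂_s` acting on `q·e^{-w²/(2s)}` representations. -/
def Ds2 (q : A2) : A2 := -(Ct ^ 3 * Dt q) + X ^ 2 * Ct ^ 4 * q

lemma Dt_Ct_pow_mul (k : ℕ) (q : A2) :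
    Dt (Ct ^ k * q) = C (derivative (X ^ k : Polynomial ℝ)) * q + Ct ^ k * Dt q := by
  have h : (Ct : A2) ^ k = C (X ^ k) := by simp [Ct, C_pow]
  rw [h, Dt_C_mul, ← h]

lemma C_derivative_X_sq : (C (derivative (X ^ 2 : Polynomial ℝ)) : A2) = 2 * Ct := by
  rw [derivative_X_pow]
  simp [map_ofNat, Ct]

lemma comm_Dw_Ds2 (q : A2) : Dw (Ds2 q) = Ds2 (Dw q) := by
  have hXq' : Dt (X * Ct ^ 2 * q) = 2 * (X * Ct * q) + X * Ct ^ 2 * Dt q := by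
    rw [mul_assoc, Dt_X_mul, Dt_Ct_pow_mul, C_derivative_X_sq]; ring
  simp only [Dw, Ds2]
  rw [Dt_sub, Dt_derivative, hXq']
  simp only [derivative_add, derivative_neg, derivative_sub, derivative_mul, derivative_pow,
    derivative_X, derivative_Ct_pow, derivative_Ct, map_ofNat, map_natCast,
    mul_zero, zero_mul, mul_one, add_zero, zero_add]
  push_cast
  ring

/-- `q_j`: representation of the j-th `w`-derivative of the Gaussian kernel. -/
def hq : ℕ → A2 := fun j => Dw^[j] Ct

lemma hq_succ (j : ℕ) : hq (j + 1) = Dw (hq j) := Function.iterate_succ_apply' Dw j Ct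

lemma Dt_one : Dt (1 : A2) = 0 := by
  ext n; simp only [coeff_Dt, Polynomial.coeff_one, coeff_zero]
  split <;> simp

lemma Dt_Ct : Dt Ct = 1 := by
  have h : (Ct : A2) = C X * 1 := by simp [Ct]
  rw [h, Dt_C_mul, Dt_one]
  simp

lemma Ds2_hq (j : ℕ) : Ds2 (hq j) = hq (j + 2) := by
  induction j with
  | zero =>
      show Ds2 Ct = hq 2
      have h2 : hq 2 = Dw (Dw Ct) := by rw [show (2:ℕ) = 1 + 1 from rfl, hq_succ, hq_succ]; rfl
      rw [h2]
      simp only [Ds2, Dw, Dt_Ct, derivative_Ct]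
      simp only [derivative_sub, derivative_mul, derivative_pow, derivative_X,
        derivative_Ct_pow, derivative_Ct, derivative_zero]
      ring
  | succ j ih =>
      rw [hq_succ, ← comm_Dw_Ds2, ih, ← hq_succ]

end HeatCM
-- appended to part1
namespace HeatCM
open Polynomial Real

/-- Evaluation of a bivariate polynomial at `τ = (√s)⁻¹` (inner) and `w` (outer). -/
def Ev (s w : ℝ) : A2 →+* ℝ :=
  (evalRingHom w).comp (mapRingHom (evalRingHom ((Real.sqrt s)⁻¹)))

lemma Ev_apply (s w : ℝ) (q : A2) :
    Ev s w q = (q.map (evalRingHom ((Real.sqrt s)⁻¹))).eval w := rfl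

@[simp] lemma Ev_X (s w : ℝ) : Ev s w X = w := by simp [Ev]

@[simp] lemma Ev_Ct (s w : ℝ) : Ev s w Ct = (Real.sqrt s)⁻¹ := by simp [Ev, Ct]

lemma hasDerivAt_Ev_w (q : A2) (s w : ℝ) :
    HasDerivAt (fun w' => Ev s w' q) (Ev s w (derivative q)) w := by
  have h := Polynomial.hasDerivAt (q.map (evalRingHom ((Real.sqrt s)⁻¹))) w
  rw [derivative_map] at h
  exact h

lemma natDegree_Dt_le (q : A2) : (Dt q).natDegree ≤ q.natDegree := by
  refine Polynomial.natDegree_le_iff_coeff_eq_zero.mpr fun m hm => ?_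
  rw [coeff_Dt, Polynomial.coeff_eq_zero_of_natDegree_lt hm]
  simp

lemma Ev_sum (q : A2) (s w : ℝ) :
    Ev s w q = ∑ n ∈ Finset.range (q.natDegree + 1),
      (q.coeff n).eval ((Real.sqrt s)⁻¹) * w ^ n := by
  rw [Ev_apply, Polynomial.eval_map, Polynomial.eval₂_eq_sum_range]
  rfl

lemma Ev_Dt_sum (q : A2) (s w : ℝ) :
    Ev s w (Dt q) = ∑ n ∈ Finset.range (q.natDegree + 1),
      (derivative (q.coeff n)).eval ((Real.sqrt s)⁻¹) * w ^ n := by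
  rw [Ev_apply, Polynomial.eval_map,
    Polynomial.eval₂_eq_sum_range' _ (Nat.lt_succ_of_le (natDegree_Dt_le q)) w]
  simp [coeff_Dt]

lemma hasDerivAt_sqrt_inv {s : ℝ} (hs : 0 < s) :
    HasDerivAt (fun u => (Real.sqrt u)⁻¹) (-(1/2) * ((Real.sqrt s)⁻¹) ^ 3) s := by
  have hσ : Real.sqrt s ≠ 0 := by
    simpa [Real.sqrt_ne_zero'] using hs
  have h := (Real.hasDerivAt_sqrt hs.ne').inv hσ
  refine h.congr_deriv ?_
  field_simp

lemma hasDerivAt_Ev_s (q : A2) (w : ℝ) {s : ℝ} (hs : 0 < s) :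
    HasDerivAt (fun s' => Ev s' w q)
      (-(1/2) * ((Real.sqrt s)⁻¹) ^ 3 * Ev s w (Dt q)) s := by
  have hfun : (fun s' => Ev s' w q)
      = fun s' => ∑ n ∈ Finset.range (q.natDegree + 1),
          (q.coeff n).eval ((Real.sqrt s')⁻¹) * w ^ n := funext fun s' => Ev_sum q s' w
  rw [hfun]
  have h : HasDerivAt (fun s' => ∑ n ∈ Finset.range (q.natDegree + 1),
      (q.coeff n).eval ((Real.sqrt s')⁻¹) * w ^ n)
      (∑ n ∈ Finset.range (q.natDegree + 1),
        ((derivative (q.coeff n)).eval ((Real.sqrt s)⁻¹)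
          * (-(1/2) * ((Real.sqrt s)⁻¹) ^ 3)) * w ^ n) s := by
    refine HasDerivAt.fun_sum fun n _ => ?_
    exact ((Polynomial.hasDerivAt (q.coeff n) _).comp s (hasDerivAt_sqrt_inv hs)).mul_const _
  convert h using 1
  rw [Ev_Dt_sum, Finset.mul_sum]
  refine Finset.sum_congr rfl fun n _ => by ring

lemma hasDerivAt_gauss_w (s w : ℝ) :
    HasDerivAt (fun w => Real.exp (-w ^ 2 / (2 * s)))
      (-(w / s) * Real.exp (-w ^ 2 / (2 * s))) w := by
  have hinner : HasDerivAt (fun w : ℝ => -w ^ 2 / (2 * s)) (-(w / s)) w := by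
    have h := ((hasDerivAt_pow 2 w).neg).div_const (2 * s)
    refine h.congr_deriv ?_
    simp
    ring
  have := hinner.exp
  simpa [mul_comm] using this

lemma hasDerivAt_gauss_s (w : ℝ) {s : ℝ} (hs : 0 < s) :
    HasDerivAt (fun s' => Real.exp (-w ^ 2 / (2 * s')))
      ((w ^ 2 / (2 * s ^ 2)) * Real.exp (-w ^ 2 / (2 * s))) s := by
  have hfun : (fun s' : ℝ => -w ^ 2 / (2 * s')) = fun s' => (-w ^ 2 / 2) * s'⁻¹ := by
    funext s'
    rw [div_eq_mul_inv, div_eq_mul_inv, mul_inv]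
    ring
  have hinner : HasDerivAt (fun s' : ℝ => -w ^ 2 / (2 * s')) (w ^ 2 / (2 * s ^ 2)) s := by
    rw [hfun]
    have h := (hasDerivAt_inv hs.ne').const_mul (-w ^ 2 / 2)
    refine h.congr_deriv ?_
    field_simp
  have := hinner.exp
  simpa [mul_comm] using this

lemma sqrt_inv_sq {s : ℝ} (hs : 0 < s) : ((Real.sqrt s)⁻¹) ^ 2 = s⁻¹ := by
  rw [inv_pow, Real.sq_sqrt hs.le]

lemma master_w (q : A2) {s : ℝ} (hs : 0 < s) (w : ℝ) :
    HasDerivAt (fun w => Ev s w q * Real.exp (-w ^ 2 / (2 * s)))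
      (Ev s w (Dw q) * Real.exp (-w ^ 2 / (2 * s))) w := by
  have h := (hasDerivAt_Ev_w q s w).mul (hasDerivAt_gauss_w s w)
  refine h.congr_deriv ?_
  have hτ : ((Real.sqrt s)⁻¹) ^ 2 = s⁻¹ := sqrt_inv_sq hs
  rw [Dw]
  simp only [map_sub, map_mul, map_pow, Ev_X, Ev_Ct, hτ]
  field_simp
  ring

lemma master_s (q : A2) (w : ℝ) {s : ℝ} (hs : 0 < s) :
    HasDerivAt (fun s' => Ev s' w q * Real.exp (-w ^ 2 / (2 * s')))
      ((1/2) * (Ev s w (Ds2 q) * Real.exp (-w ^ 2 / (2 * s)))) s := by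
  have h := (hasDerivAt_Ev_s q w hs).mul (hasDerivAt_gauss_s w hs)
  refine h.congr_deriv ?_
  have hτ : ((Real.sqrt s)⁻¹) ^ 2 = s⁻¹ := sqrt_inv_sq hs
  have hτ4 : ((Real.sqrt s)⁻¹) ^ 4 = (s ^ 2)⁻¹ := by
    rw [show (4 : ℕ) = 2 * 2 from rfl, pow_mul, hτ, ← inv_pow]
  rw [Ds2]
  simp only [map_add, map_neg, map_mul, map_pow, Ev_X, Ev_Ct, hτ4]
  field_simp

/-- The `j`-th spatial derivative of the heat kernel at time `s`. -/
def gke (j : ℕ) (s w : ℝ) : ℝ :=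
  (Real.sqrt (2 * Real.pi))⁻¹ * (Ev s w (hq j) * Real.exp (-w ^ 2 / (2 * s)))

lemma gke_hasDerivAt_w (j : ℕ) {s : ℝ} (hs : 0 < s) (w : ℝ) :
    HasDerivAt (fun w => gke j s w) (gke (j + 1) s w) w := by
  unfold gke
  rw [hq_succ]
  exact (master_w (hq j) hs w).const_mul _

lemma gke_hasDerivAt_s (j : ℕ) (w : ℝ) {s : ℝ} (hs : 0 < s) :
    HasDerivAt (fun s' => gke j s' w) ((1/2) * gke (j + 2) s w) s := by
  unfold gke
  rw [← Ds2_hq]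
  have := (master_s (hq j) w hs).const_mul ((Real.sqrt (2 * Real.pi))⁻¹)
  refine this.congr_deriv ?_
  ring

lemma gke_continuous (j : ℕ) (s : ℝ) : Continuous (fun w => gke j s w) := by
  unfold gke
  refine continuous_const.mul (Continuous.mul ?_ ?_)
  · have h : (fun w => Ev s w (hq j))
        = fun w => ((hq j).map (evalRingHom ((Real.sqrt s)⁻¹))).eval w := rfl
    rw [h]
    exact Polynomial.continuous _
  · exact Real.continuous_exp.comp ((continuous_pow 2).neg.div_const (2 * s))

end HeatCM
namespace HeatCM
open Polynomial Real Filter MeasureTheory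

lemma tendsto_pow_gauss_atTop (i : ℕ) {b : ℝ} (hb : 0 < b) :
    Tendsto (fun u : ℝ => u ^ i * Real.exp (-(b * u ^ 2))) atTop (nhds 0) := by
  have key : Tendsto (fun x : ℝ => b⁻¹ ^ i * (x ^ i * Real.exp (-x))) atTop (nhds 0) := by
    simpa using (tendsto_pow_mul_exp_neg_atTop_nhds_zero i).const_mul (b⁻¹ ^ i)
  have harg : Tendsto (fun u : ℝ => b * u ^ 2) atTop atTop :=
    (tendsto_pow_atTop (two_ne_zero)).const_mul_atTop hb
  have comp := key.comp harg
  refine squeeze_zero' ?_ ?_ comp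
  · filter_upwards [eventually_ge_atTop (0:ℝ)] with u hu
    positivity
  · filter_upwards [eventually_ge_atTop (1:ℝ)] with u hu
    have h1 : u ^ i ≤ b⁻¹ ^ i * (b * u ^ 2) ^ i := by
      rw [mul_pow, ← mul_assoc, ← mul_pow, inv_mul_cancel₀ hb.ne', one_pow, one_mul, ← pow_mul]
      exact pow_le_pow_right₀ (by linarith) (by omega)
    have := mul_le_mul_of_nonneg_right h1 (Real.exp_pos (-(b * u ^ 2))).le
    simpa [Function.comp, mul_assoc] using this

lemma tendsto_abs_pow_gauss_atTop (i : ℕ) {b : ℝ} (hb : 0 < b) :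
    Tendsto (fun w : ℝ => |w| ^ i * Real.exp (-(b * w ^ 2))) atTop (nhds 0) := by
  have h : (fun w : ℝ => |w| ^ i * Real.exp (-(b * w ^ 2)))
      = (fun u : ℝ => u ^ i * Real.exp (-(b * u ^ 2))) ∘ (fun w : ℝ => |w|) := by
    funext w; simp [Function.comp, sq_abs]
  rw [h]
  exact (tendsto_pow_gauss_atTop i hb).comp tendsto_abs_atTop_atTop

lemma tendsto_abs_pow_gauss_atBot (i : ℕ) {b : ℝ} (hb : 0 < b) :
    Tendsto (fun w : ℝ => |w| ^ i * Real.exp (-(b * w ^ 2))) atBot (nhds 0) := by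
  have h : (fun w : ℝ => |w| ^ i * Real.exp (-(b * w ^ 2)))
      = (fun u : ℝ => u ^ i * Real.exp (-(b * u ^ 2))) ∘ (fun w : ℝ => |w|) := by
    funext w; simp [Function.comp, sq_abs]
  rw [h]
  exact (tendsto_pow_gauss_atTop i hb).comp tendsto_abs_atBot_atTop

lemma exists_bound_of_cont_tendsto {φ : ℝ → ℝ} (hc : Continuous φ)
    (ht : Tendsto φ atTop (nhds 0)) (hbot : Tendsto φ atBot (nhds 0)) :
    ∃ C, 0 ≤ C ∧ ∀ w, |φ w| ≤ C := by
  have h1 : ∀ᶠ w in atTop, ‖φ w‖ < 1 := by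
    have := NormedAddCommGroup.tendsto_nhds_zero.mp ht 1 one_pos
    exact this
  have h2 : ∀ᶠ w in atBot, ‖φ w‖ < 1 :=
    NormedAddCommGroup.tendsto_nhds_zero.mp hbot 1 one_pos
  obtain ⟨A, hA⟩ := eventually_atTop.mp h1
  obtain ⟨B, hB⟩ := eventually_atBot.mp h2
  obtain ⟨C0, hC0⟩ := (isCompact_Icc (a := B) (b := A)).exists_bound_of_continuousOn
    hc.continuousOn
  refine ⟨max C0 1, le_trans zero_le_one (le_max_right _ _), fun w => ?_⟩
  rcases le_total w B with h | h
  · exact le_trans (le_of_lt (hB w h)) (le_max_right _ _)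
  rcases le_total A w with h' | h'
  · exact le_trans (le_of_lt (hA w h')) (le_max_right _ _)
  · exact le_trans (hC0 w ⟨h, h'⟩) (le_max_left _ _)

lemma abs_pow_gauss_bound (i : ℕ) {b : ℝ} (hb : 0 < b) :
    ∃ C, 0 ≤ C ∧ ∀ w : ℝ, |w| ^ i * Real.exp (-(b * w ^ 2)) ≤ C := by
  have hc : Continuous (fun w : ℝ => |w| ^ i * Real.exp (-(b * w ^ 2))) := by
    exact ((continuous_abs.pow i).mul ((continuous_const.mul (continuous_pow 2)).neg.rexp))
  obtain ⟨C, hC0, hC⟩ := exists_bound_of_cont_tendsto hc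
    (tendsto_abs_pow_gauss_atTop i hb) (tendsto_abs_pow_gauss_atBot i hb)
  exact ⟨C, hC0, fun w => le_trans (le_abs_self _) (hC w)⟩

lemma abs_eval_le (p : Polynomial ℝ) {x y : ℝ} (h : |x| ≤ y) :
    |p.eval x| ≤ ∑ i ∈ Finset.range (p.natDegree + 1), |p.coeff i| * y ^ i := by
  rw [Polynomial.eval_eq_sum_range]
  refine (Finset.abs_sum_le_sum_abs _ _).trans (Finset.sum_le_sum fun i _ => ?_)
  rw [abs_mul, abs_pow]
  exact mul_le_mul_of_nonneg_left
    (pow_le_pow_left₀ (abs_nonneg x) h i) (abs_nonneg _)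

lemma gke_bound (j : ℕ) {a b : ℝ} (ha : 0 < a) (hab : a ≤ b) :
    ∃ M, 0 ≤ M ∧ ∀ s ∈ Set.Icc a b, ∀ w, |gke j s w| ≤ M := by
  set q := hq j with hqdef
  set N := q.natDegree + 1 with hN
  set τa := (Real.sqrt a)⁻¹ with hτadef
  have hτa0 : 0 ≤ τa := inv_nonneg.mpr (Real.sqrt_nonneg a)
  have hb0 : 0 < b := lt_of_lt_of_le ha hab
  have hB : ∀ n : ℕ, ∃ C, 0 ≤ C ∧ ∀ w : ℝ,
      |w| ^ n * Real.exp (-((2*b)⁻¹ * w ^ 2)) ≤ C :=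
    fun n => abs_pow_gauss_bound n (by positivity)
  choose C hC0 hCle using hB
  set K : ℕ → ℝ := fun n =>
    ∑ i ∈ Finset.range ((q.coeff n).natDegree + 1), |(q.coeff n).coeff i| * τa ^ i with hKdef
  have hK0 : ∀ n, 0 ≤ K n := fun n =>
    Finset.sum_nonneg fun i _ => mul_nonneg (abs_nonneg _) (pow_nonneg hτa0 i)
  refine ⟨(Real.sqrt (2*Real.pi))⁻¹ * ∑ n ∈ Finset.range N, K n * C n, ?_, ?_⟩
  · exact mul_nonneg (inv_nonneg.mpr (Real.sqrt_nonneg _))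
      (Finset.sum_nonneg fun n _ => mul_nonneg (hK0 n) (hC0 n))
  intro s hs w
  obtain ⟨hsa, hsb⟩ := hs
  have hs0 : 0 < s := lt_of_lt_of_le ha hsa
  have hτs : |(Real.sqrt s)⁻¹| ≤ τa := by
    rw [abs_of_nonneg (inv_nonneg.mpr (Real.sqrt_nonneg s))]
    exact inv_anti₀ (Real.sqrt_pos.mpr ha) (Real.sqrt_le_sqrt hsa)
  have hexp : Real.exp (-w^2/(2*s)) ≤ Real.exp (-((2*b)⁻¹ * w^2)) := by
    apply Real.exp_le_exp.mpr
    rw [inv_mul_eq_div, neg_div]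
    apply neg_le_neg
    exact div_le_div_of_nonneg_left (sq_nonneg w) (by linarith) (by linarith)
  have h1 : |Ev s w q| ≤ ∑ n ∈ Finset.range N, K n * |w| ^ n := by
    rw [Ev_sum]
    refine (Finset.abs_sum_le_sum_abs _ _).trans (Finset.sum_le_sum fun n _ => ?_)
    rw [abs_mul, abs_pow]
    exact mul_le_mul_of_nonneg_right (abs_eval_le _ hτs) (pow_nonneg (abs_nonneg w) n)
  have h2 : |Ev s w q| * Real.exp (-w^2/(2*s))
      ≤ ∑ n ∈ Finset.range N, K n * (|w| ^ n * Real.exp (-((2*b)⁻¹ * w^2))) := by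
    calc |Ev s w q| * Real.exp (-w^2/(2*s))
        ≤ (∑ n ∈ Finset.range N, K n * |w| ^ n) * Real.exp (-((2*b)⁻¹ * w^2)) :=
          mul_le_mul h1 hexp (Real.exp_pos _).le
            (Finset.sum_nonneg fun n _ => mul_nonneg (hK0 n) (pow_nonneg (abs_nonneg w) n))
      _ = ∑ n ∈ Finset.range N, K n * (|w| ^ n * Real.exp (-((2*b)⁻¹ * w^2))) := by
          rw [Finset.sum_mul]
          exact Finset.sum_congr rfl fun n _ => by ring
  have h3 : ∑ n ∈ Finset.range N, K n * (|w| ^ n * Real.exp (-((2*b)⁻¹ * w^2)))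
      ≤ ∑ n ∈ Finset.range N, K n * C n :=
    Finset.sum_le_sum fun n _ => mul_le_mul_of_nonneg_left (hCle n w) (hK0 n)
  have habs : |gke j s w| = (Real.sqrt (2*Real.pi))⁻¹ * (|Ev s w q| * Real.exp (-w^2/(2*s))) := by
    rw [gke, abs_mul, abs_mul, Real.abs_exp,
      abs_of_nonneg (inv_nonneg.mpr (Real.sqrt_nonneg _))]
  rw [habs]
  exact mul_le_mul_of_nonneg_left (le_trans h2 h3) (inv_nonneg.mpr (Real.sqrt_nonneg _))

lemma integrable_pow_gauss (i : ℕ) {b : ℝ} (hb : 0 < b) :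
    Integrable (fun w : ℝ => w ^ i * Real.exp (-(b * w ^ 2))) := by
  obtain ⟨C, hC0, hC⟩ := abs_pow_gauss_bound i (half_pos hb)
  have hg : Integrable (fun w : ℝ => C * Real.exp (-(b/2 * w ^ 2))) := by
    have := integrable_exp_neg_mul_sq (half_pos hb)
    simpa [neg_mul] using this.const_mul C
  refine hg.mono' ?_ ?_
  · exact (((continuous_pow i).mul ((continuous_const.mul (continuous_pow 2)).neg.rexp))).aestronglyMeasurable
  · refine Filter.Eventually.of_forall fun w => ?_
    have hsplit : Real.exp (-(b * w ^ 2))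
        = Real.exp (-(b/2 * w ^ 2)) * Real.exp (-(b/2 * w ^ 2)) := by
      rw [← Real.exp_add]; ring_nf
    rw [Real.norm_eq_abs, abs_mul, abs_pow, Real.abs_exp, hsplit, ← mul_assoc]
    exact mul_le_mul_of_nonneg_right (hC w) (Real.exp_pos _).le

lemma polyGauss_integrable (P : Polynomial ℝ) {b : ℝ} (hb : 0 < b) :
    Integrable (fun w : ℝ => P.eval w * Real.exp (-(b * w ^ 2))) := by
  have h : (fun w : ℝ => P.eval w * Real.exp (-(b * w ^ 2)))
      = fun w => ∑ i ∈ Finset.range (P.natDegree + 1),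
          P.coeff i * (w ^ i * Real.exp (-(b * w ^ 2))) := by
    funext w
    rw [Polynomial.eval_eq_sum_range, Finset.sum_mul]
    exact Finset.sum_congr rfl fun i _ => by ring
  rw [h]
  exact integrable_finset_sum _ fun i _ => (integrable_pow_gauss i hb).const_mul _

lemma gke_integrable (j : ℕ) {s : ℝ} (hs : 0 < s) :
    Integrable (fun w => gke j s w) := by
  have h : (fun w => gke j s w)
      = fun w => (Real.sqrt (2*Real.pi))⁻¹ *
          (((hq j).map (evalRingHom ((Real.sqrt s)⁻¹))).eval w
            * Real.exp (-((2*s)⁻¹ * w ^ 2))) := by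
    funext w
    rw [gke, Ev_apply]
    congr 2
    rw [inv_mul_eq_div, neg_div]
  rw [h]
  exact (polyGauss_integrable _ (by positivity)).const_mul _

end HeatCM
namespace HeatCM
open Polynomial Real Filter MeasureTheory

lemma gke_zero {s : ℝ} (w : ℝ) :
    gke 0 s w = (Real.sqrt (2 * Real.pi))⁻¹ * ((Real.sqrt s)⁻¹ * Real.exp (-w ^ 2 / (2 * s))) := by
  rw [gke]
  have : hq 0 = Ct := rfl
  rw [this, Ev_Ct]

lemma gke_prod_integrable (m n : ℕ) {s : ℝ} (hs : 0 < s) (w : ℝ) :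
    Integrable (fun u => gke m s u * gke n s (u - w)) := by
  obtain ⟨M, hM0, hM⟩ := gke_bound n hs le_rfl
  refine (((gke_integrable m hs).abs.mul_const M)).mono' ?_ ?_
  · exact ((gke_continuous m s).mul ((gke_continuous n s).comp
      (continuous_id.sub continuous_const))).aestronglyMeasurable
  · refine Filter.Eventually.of_forall fun u => ?_
    rw [Real.norm_eq_abs, abs_mul]
    exact mul_le_mul_of_nonneg_left (hM s ⟨le_rfl, le_rfl⟩ (u - w)) (abs_nonneg _) |>.trans_eq rfl
      |>.trans (le_of_eq rfl) |>.trans_eq rfl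

/-- Gaussian self-convolution identity. -/
lemma gaussian_conv {s : ℝ} (hs : 0 < s) (w : ℝ) :
    (∫ u, gke 0 s u * gke 0 s (u - w)) = gke 0 (2 * s) w := by
  have hv : (Real.toNNReal (s / 2)) ≠ 0 := by
    simp [Real.toNNReal_eq_zero]
    linarith
  have hvc : ((Real.toNNReal (s / 2)) : ℝ) = s / 2 := Real.coe_toNNReal _ (by linarith)
  have key : ∀ u, gke 0 s u * gke 0 s (u - w)
      = gke 0 (2 * s) w * ProbabilityTheory.gaussianPDFReal (w / 2) (Real.toNNReal (s / 2)) u := by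
    intro u
    rw [gke_zero, gke_zero, gke_zero, ProbabilityTheory.gaussianPDFReal, hvc]
    have hsq : Real.sqrt (2 * Real.pi) * Real.sqrt s = Real.sqrt (2 * Real.pi * s) :=
      (Real.sqrt_mul (by positivity) s).symm
    -- constants
    have hC1 : (Real.sqrt (2 * Real.pi))⁻¹ * (Real.sqrt s)⁻¹
        * ((Real.sqrt (2 * Real.pi))⁻¹ * (Real.sqrt s)⁻¹) = (2 * Real.pi * s)⁻¹ := by
      rw [show (Real.sqrt (2*Real.pi))⁻¹ * (Real.sqrt s)⁻¹
            * ((Real.sqrt (2*Real.pi))⁻¹ * (Real.sqrt s)⁻¹)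
          = ((Real.sqrt (2*Real.pi) * Real.sqrt s) * (Real.sqrt (2*Real.pi) * Real.sqrt s))⁻¹ by
            rw [mul_inv, mul_inv]; try ring,
        hsq, Real.mul_self_sqrt (by positivity : (0:ℝ) ≤ 2 * Real.pi * s)]
    have hC2 : (Real.sqrt (2 * Real.pi))⁻¹ * (Real.sqrt (2 * s))⁻¹
        * (Real.sqrt (2 * Real.pi * (s / 2)))⁻¹ = (2 * Real.pi * s)⁻¹ := by
      rw [← mul_inv, ← Real.sqrt_mul (by positivity : (0:ℝ) ≤ 2 * Real.pi) (2*s), ← mul_inv,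
        ← Real.sqrt_mul (by positivity : (0:ℝ) ≤ 2 * Real.pi * (2*s)) _,
        show 2 * Real.pi * (2 * s) * (2 * Real.pi * (s / 2)) = (2 * Real.pi * s) ^ 2 by ring,
        Real.sqrt_sq (by positivity)]
    -- exponents
    have hE : -u ^ 2 / (2 * s) + -(u - w) ^ 2 / (2 * s)
        = -w ^ 2 / (2 * (2 * s)) + -(u - w / 2) ^ 2 / (2 * (s / 2)) := by
      field_simp
      ring
    calc (Real.sqrt (2 * Real.pi))⁻¹ * ((Real.sqrt s)⁻¹ * Real.exp (-u ^ 2 / (2 * s)))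
          * ((Real.sqrt (2 * Real.pi))⁻¹ * ((Real.sqrt s)⁻¹ * Real.exp (-(u - w) ^ 2 / (2 * s))))
        = ((Real.sqrt (2 * Real.pi))⁻¹ * (Real.sqrt s)⁻¹
            * ((Real.sqrt (2 * Real.pi))⁻¹ * (Real.sqrt s)⁻¹))
          * Real.exp (-u ^ 2 / (2 * s) + -(u - w) ^ 2 / (2 * s)) := by
          rw [Real.exp_add]; ring
      _ = ((Real.sqrt (2 * Real.pi))⁻¹ * (Real.sqrt (2 * s))⁻¹
            * (Real.sqrt (2 * Real.pi * (s / 2)))⁻¹)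
          * Real.exp (-w ^ 2 / (2 * (2 * s)) + -(u - w / 2) ^ 2 / (2 * (s / 2))) := by
          rw [hC1, hC2, hE]
      _ = (Real.sqrt (2 * Real.pi))⁻¹ * ((Real.sqrt (2 * s))⁻¹ * Real.exp (-w ^ 2 / (2 * (2 * s))))
          * ((Real.sqrt (2 * Real.pi * (s / 2)))⁻¹ * Real.exp (-(u - w / 2) ^ 2 / (2 * (s / 2)))) := by
          rw [Real.exp_add]; ring
  rw [funext key]
  rw [MeasureTheory.integral_const_mul]
  rw [ProbabilityTheory.integral_gaussianPDFReal_eq_one (w/2) hv, mul_one]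

/-- Differentiating the convolution identity `j` times in `w`. -/
lemma gaussian_conv_deriv {s : ℝ} (hs : 0 < s) (j : ℕ) :
    ∀ w, (∫ u, gke 0 s u * gke j s (u - w)) = (-1 : ℝ) ^ j * gke j (2 * s) w := by
  induction j with
  | zero => intro w; simpa using gaussian_conv hs w
  | succ j ih =>
    intro w₀
    obtain ⟨M, hM0, hM⟩ := gke_bound (j + 1) hs le_rfl
    have h2s : 0 < 2 * s := by linarith
    have hdd := hasDerivAt_integral_of_dominated_loc_of_deriv_le
      (F := fun w u => gke 0 s u * gke j s (u - w))
      (F' := fun w u => gke 0 s u * (-gke (j + 1) s (u - w)))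
      (bound := fun u => |gke 0 s u| * M)
      (x₀ := w₀) (s := Metric.ball w₀ 1) (Metric.ball_mem_nhds _ one_pos)
      (Filter.Eventually.of_forall fun w => ((gke_continuous 0 s).mul
        ((gke_continuous j s).comp (continuous_id.sub continuous_const))).aestronglyMeasurable)
      (gke_prod_integrable 0 j hs w₀)
      (((gke_continuous 0 s).mul (((gke_continuous (j+1) s).comp
        (continuous_id.sub continuous_const)).neg)).aestronglyMeasurable)
      (Filter.Eventually.of_forall fun u => fun w _ => by
        rw [Real.norm_eq_abs, abs_mul, abs_neg]
        exact mul_le_mul_of_nonneg_left (hM s ⟨le_rfl, le_rfl⟩ (u - w)) (abs_nonneg _))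
      ((gke_integrable 0 hs).abs.mul_const M)
      (Filter.Eventually.of_forall fun u => fun w _ => by
        have hinner : HasDerivAt (fun w : ℝ => u - w) (-1 : ℝ) w := by
          simpa using (hasDerivAt_id w).const_sub u
        have houter := (gke_hasDerivAt_w j hs (u - w)).comp w hinner
        have := houter.const_mul (gke 0 s u)
        simpa [mul_comm, mul_assoc, mul_neg] using this)
    have hR : HasDerivAt (fun w => (-1 : ℝ) ^ j * gke j (2 * s) w)
        ((-1 : ℝ) ^ j * gke (j + 1) (2 * s) w₀) w₀ :=
      (gke_hasDerivAt_w j h2s w₀).const_mul _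
    have hL : HasDerivAt (fun w => (-1 : ℝ) ^ j * gke j (2 * s) w)
        (∫ u, gke 0 s u * (-gke (j + 1) s (u - w₀))) w₀ := by
      have := hdd.2
      rwa [funext ih] at this
    have huniq := hL.unique hR
    have : (∫ u, gke 0 s u * (-gke (j + 1) s (u - w₀)))
        = -∫ u, gke 0 s u * gke (j + 1) s (u - w₀) := by
      rw [← MeasureTheory.integral_neg]
      congr 1; funext u; ring
    rw [this] at huniq
    have := neg_eq_iff_eq_neg.mp huniq
    rw [this]
    ring

/-- Integration by parts step. -/
lemma gke_ibp (j l : ℕ) {s : ℝ} (hs : 0 < s) (w : ℝ) :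
    (∫ u, gke j s u * gke (l + 1) s (u - w))
      = -∫ u, gke (j + 1) s u * gke l s (u - w) := by
  refine MeasureTheory.integral_mul_deriv_eq_deriv_mul_of_integrable
    (u := fun u => gke j s u) (u' := fun u => gke (j+1) s u)
    (v := fun u => gke l s (u - w)) (v' := fun u => gke (l+1) s (u - w))
    (fun x _ => gke_hasDerivAt_w j hs x) (fun x _ => ?_) ?_ ?_ ?_
  · have hinner : HasDerivAt (fun u : ℝ => u - w) (1 : ℝ) x := (hasDerivAt_id x).sub_const w
    have := (gke_hasDerivAt_w l hs (x - w)).comp x hinner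
    exact this.congr_deriv (mul_one _)
  · exact gke_prod_integrable j (l+1) hs w
  · exact gke_prod_integrable (j+1) l hs w
  · exact gke_prod_integrable j l hs w

lemma gke_ibp_iter (j : ℕ) : ∀ (l : ℕ) {s : ℝ}, 0 < s → ∀ w,
    (∫ u, gke j s u * gke l s (u - w))
      = (-1 : ℝ) ^ j * ∫ u, gke 0 s u * gke (l + j) s (u - w) := by
  induction j with
  | zero => intro l s hs w; simp
  | succ j ih =>
    intro l s hs w
    have h1 : (∫ u, gke (j + 1) s u * gke l s (u - w))
        = -∫ u, gke j s u * gke (l + 1) s (u - w) := by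
      rw [gke_ibp j l hs w, neg_neg]
    rw [h1, ih (l + 1) hs w]
    have : l + 1 + j = l + (j + 1) := by omega
    rw [this]
    ring

/-- The key kernel identity: `∫ p_k(u) p_k(u-w) du = (-1)^k ∂^{2k} G(2s)(w)`. -/
lemma gke_corr (k : ℕ) {s : ℝ} (hs : 0 < s) (w : ℝ) :
    (∫ u, gke k s u * gke k s (u - w)) = (-1 : ℝ) ^ k * gke (2 * k) (2 * s) w := by
  rw [gke_ibp_iter k k hs w, gaussian_conv_deriv hs (k + k) w]
  have h1 : k + k = 2 * k := by omega
  have h2 : ((-1 : ℝ)) ^ (k + k) = 1 := by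
    have : Even (k + k) := ⟨k, rfl⟩
    exact this.neg_one_pow
  rw [h1] at *
  rw [h2]
  ring

end HeatCM
namespace HeatCM
open Polynomial Real Filter MeasureTheory

variable {f : ℝ → ℝ}

/-- Convolution of `f` with the `k`-th derivative of the heat kernel. -/
def cnv (f : ℝ → ℝ) (k : ℕ) (t x : ℝ) : ℝ := ∫ y, f y * gke k t (x - y)

lemma aesm_cnv_integrand (hfm : Measurable f) (k : ℕ) (t x : ℝ) :
    AEStronglyMeasurable (fun y => f y * gke k t (x - y)) volume :=
  (hfm.mul (((gke_continuous k t).measurable).comp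
    (measurable_const.sub measurable_id))).aestronglyMeasurable

lemma integrable_cnv_integrand (hfm : Measurable f) (hf : Integrable f)
    (k : ℕ) {t : ℝ} (ht : 0 < t) (x : ℝ) :
    Integrable (fun y => f y * gke k t (x - y)) := by
  obtain ⟨M, hM0, hM⟩ := gke_bound k ht le_rfl
  refine (hf.abs.mul_const M).mono' (aesm_cnv_integrand hfm k t x) ?_
  refine Filter.Eventually.of_forall fun y => ?_
  rw [Real.norm_eq_abs, abs_mul]
  exact mul_le_mul_of_nonneg_left (hM t ⟨le_rfl, le_rfl⟩ (x - y)) (abs_nonneg _)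

lemma cnv_hasDerivAt (hfm : Measurable f) (hf : Integrable f)
    (k : ℕ) {t : ℝ} (ht : 0 < t) (x₀ : ℝ) :
    HasDerivAt (fun x => cnv f k t x) (cnv f (k + 1) t x₀) x₀ := by
  obtain ⟨M, hM0, hM⟩ := gke_bound (k + 1) ht le_rfl
  have hdd := hasDerivAt_integral_of_dominated_loc_of_deriv_le
    (F := fun x y => f y * gke k t (x - y))
    (F' := fun x y => f y * gke (k + 1) t (x - y))
    (bound := fun y => |f y| * M)
    (x₀ := x₀) (s := Metric.ball x₀ 1) (Metric.ball_mem_nhds _ one_pos)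
    (Filter.Eventually.of_forall fun x => aesm_cnv_integrand hfm k t x)
    (integrable_cnv_integrand hfm hf k ht x₀)
    (aesm_cnv_integrand hfm (k + 1) t x₀)
    (Filter.Eventually.of_forall fun y => fun x _ => by
      rw [Real.norm_eq_abs, abs_mul]
      exact mul_le_mul_of_nonneg_left (hM t ⟨le_rfl, le_rfl⟩ (x - y)) (abs_nonneg _))
    (hf.abs.mul_const M)
    (Filter.Eventually.of_forall fun y => fun x _ => by
      have hinner : HasDerivAt (fun x : ℝ => x - y) (1 : ℝ) x := (hasDerivAt_id x).sub_const y
      have := ((gke_hasDerivAt_w k ht (x - y)).comp x hinner).const_mul (f y)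
      simpa using this)
  exact hdd.2

lemma heatP_eq_cnv {t : ℝ} (ht : 0 < t) : heatP f t = fun x => cnv f 0 t x := by
  funext x
  rw [heatP, cnv]
  congr 1
  funext y
  rw [gke_zero]
  congr 1
  rw [← mul_assoc, ← mul_inv, Real.sqrt_mul (by positivity : (0:ℝ) ≤ 2 * Real.pi) t]

lemma deriv_iterate_heat (hfm : Measurable f) (hf : Integrable f) {t : ℝ} (ht : 0 < t) :
    ∀ k, deriv^[k] (heatP f t) = fun x => cnv f k t x := by
  intro k
  induction k with
  | zero => exact heatP_eq_cnv ht
  | succ k ih =>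
    rw [Function.iterate_succ_apply', ih]
    funext x
    exact (cnv_hasDerivAt hfm hf k ht x).deriv

lemma pk_eq_cnv (hfm : Measurable f) (hf : Integrable f) (k : ℕ) {t : ℝ} (ht : 0 < t) (x : ℝ) :
    pk f k t x = cnv f k t x := by
  rw [pk, iteratedDeriv_eq_iterate, deriv_iterate_heat hfm hf ht k]

/-- Fubini: the square integral of `cnv` as a double integral against the kernel. -/
lemma sq_integral_eq (hfm : Measurable f) (hf : Integrable f) (k : ℕ) {t : ℝ} (ht : 0 < t) :
    ∫ x, (cnv f k t x) ^ 2
      = (-1 : ℝ) ^ k * ∫ p : ℝ × ℝ, f p.1 * f p.2 * gke (2 * k) (2 * t) (p.2 - p.1) := by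
  obtain ⟨M, hM0, hM⟩ := gke_bound k ht le_rfl
  have hMle : ∀ w, |gke k t w| ≤ M := hM t ⟨le_rfl, le_rfl⟩
  set I1 : ℝ := ∫ u, |gke k t u| with hI1
  -- the inner function on the product space
  set F : ℝ → ℝ × ℝ → ℝ :=
    fun x p => (f p.1 * gke k t (x - p.1)) * (f p.2 * gke k t (x - p.2)) with hF
  have hFaesm : AEStronglyMeasurable (Function.uncurry F)
      (volume.prod (volume.prod volume)) := by
    apply Measurable.aestronglyMeasurable
    refine Measurable.mul (Measurable.mul ?_ ?_) (Measurable.mul ?_ ?_)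
    · exact hfm.comp (measurable_fst.comp measurable_snd)
    · exact (gke_continuous k t).measurable.comp
        (measurable_fst.sub (measurable_fst.comp measurable_snd))
    · exact hfm.comp (measurable_snd.comp measurable_snd)
    · exact (gke_continuous k t).measurable.comp
        (measurable_fst.sub (measurable_snd.comp measurable_snd))
  have hsec : ∀ p : ℝ × ℝ, Integrable (fun x => F x p) := by
    intro p
    have hbase : Integrable (fun u => gke k t u * gke k t (u - (p.2 - p.1))) :=
      gke_prod_integrable k k ht (p.2 - p.1)
    have hshift : Integrable (fun x => gke k t (x - p.1) * gke k t (x - p.2)) := by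
      have := hbase.comp_sub_right p.1
      refine this.congr (Filter.Eventually.of_forall fun x => ?_)
      congr 2
      ring
    have hrw : (fun x => F x p)
        = fun x => (f p.1 * f p.2) * (gke k t (x - p.1) * gke k t (x - p.2)) := by
      funext x; simp only [hF]; ring
    rw [hrw]
    exact hshift.const_mul _
  have hnormint : ∀ p : ℝ × ℝ, (∫ x, ‖F x p‖) ≤ |f p.1| * |f p.2| * (M * I1) := by
    intro p
    have h1 : ∀ x, ‖F x p‖
        = |f p.1| * |f p.2| * (|gke k t (x - p.1)| * |gke k t (x - p.2)|) := by
      intro x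
      rw [hF, Real.norm_eq_abs, abs_mul, abs_mul, abs_mul]
      ring
    rw [funext h1, MeasureTheory.integral_const_mul]
    have habs1 : Integrable (fun x => |gke k t (x - p.1)| * |gke k t (x - p.2)|) := by
      have hshift : Integrable (fun x => gke k t (x - p.1) * gke k t (x - p.2)) := by
        have := (gke_prod_integrable k k ht (p.2 - p.1)).comp_sub_right p.1
        refine this.congr (Filter.Eventually.of_forall fun x => ?_)
        congr 2
        ring
      have h := hshift.abs
      have hrw : (fun x => |gke k t (x - p.1) * gke k t (x - p.2)|)
          = fun x => |gke k t (x - p.1)| * |gke k t (x - p.2)| :=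
        funext fun x => abs_mul _ _
      rwa [hrw] at h
    have habs2 : Integrable (fun x => M * |gke k t (x - p.2)|) :=
      (((gke_integrable k ht).comp_sub_right p.2).abs.const_mul M)
    have hle : ∀ x, |gke k t (x - p.1)| * |gke k t (x - p.2)| ≤ M * |gke k t (x - p.2)| :=
      fun x => mul_le_mul_of_nonneg_right (hMle (x - p.1)) (abs_nonneg _)
    have hmono := MeasureTheory.integral_mono habs1 habs2 hle
    have htrans : (∫ x, M * |gke k t (x - p.2)|) = M * I1 := by
      rw [MeasureTheory.integral_const_mul]
      congr 1
      exact MeasureTheory.integral_sub_right_eq_self (fun u => |gke k t u|) p.2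
    exact mul_le_mul_of_nonneg_left (hmono.trans (le_of_eq htrans))
      (mul_nonneg (abs_nonneg _) (abs_nonneg _))
  have huncurry : Integrable (Function.uncurry F) (volume.prod (volume.prod volume)) := by
    refine (integrable_prod_iff' hFaesm).mpr ⟨?_, ?_⟩
    · exact Filter.Eventually.of_forall fun p => hsec p
    · refine Integrable.mono' ((hf.abs.mul_prod hf.abs).mul_const (M * I1))
        (hFaesm.norm.prod_swap.integral_prod_right') ?_
      refine Filter.Eventually.of_forall fun p => ?_
      rw [Real.norm_eq_abs, abs_of_nonneg (integral_nonneg fun x => norm_nonneg _)]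
      exact hnormint p
  -- expand square and swap
  have hsq : ∀ x, (cnv f k t x) ^ 2 = ∫ p : ℝ × ℝ, F x p ∂(volume.prod volume) := by
    intro x
    rw [pow_two, cnv, ← MeasureTheory.integral_prod_mul]
  calc ∫ x, (cnv f k t x) ^ 2
      = ∫ x, ∫ p : ℝ × ℝ, F x p ∂(volume.prod volume) := by
        congr 1; funext x; exact hsq x
    _ = ∫ p : ℝ × ℝ, (∫ x, F x p) ∂(volume.prod volume) :=
        MeasureTheory.integral_integral_swap huncurry
    _ = ∫ p : ℝ × ℝ, f p.1 * f p.2 * ((-1 : ℝ) ^ k * gke (2 * k) (2 * t) (p.2 - p.1))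
          ∂(volume.prod volume) := by
        apply MeasureTheory.integral_congr_ae
        refine Filter.Eventually.of_forall fun p => ?_
        show (∫ x, F x p) = f p.1 * f p.2 * ((-1 : ℝ) ^ k * gke (2 * k) (2 * t) (p.2 - p.1))
        have h1 : (fun x => F x p)
            = fun x => (f p.1 * f p.2) * (gke k t (x - p.1) * gke k t (x - p.2)) := by
          funext x; simp only [hF]; ring
        rw [h1, MeasureTheory.integral_const_mul]
        have h2 : (∫ x, gke k t (x - p.1) * gke k t (x - p.2))
            = ∫ u, gke k t u * gke k t (u - (p.2 - p.1)) := by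
          rw [← MeasureTheory.integral_sub_right_eq_self
            (fun u => gke k t u * gke k t (u - (p.2 - p.1))) p.1]
          congr 1
          funext x
          show gke k t (x - p.1) * gke k t (x - p.2)
            = gke k t (x - p.1) * gke k t (x - p.1 - (p.2 - p.1))
          rw [show x - p.1 - (p.2 - p.1) = x - p.2 from by ring]
        rw [h2, gke_corr k ht (p.2 - p.1)]
    _ = (-1 : ℝ) ^ k * ∫ p : ℝ × ℝ, f p.1 * f p.2 * gke (2 * k) (2 * t) (p.2 - p.1)
          ∂(volume.prod volume) := by
        rw [← MeasureTheory.integral_const_mul]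
        congr 1
        funext p
        ring
    _ = (-1 : ℝ) ^ k * ∫ p : ℝ × ℝ, f p.1 * f p.2 * gke (2 * k) (2 * t) (p.2 - p.1) := by
        rw [← MeasureTheory.Measure.volume_eq_prod]

end HeatCM
namespace HeatCM
open Polynomial Real Filter MeasureTheory

variable {f : ℝ → ℝ}

/-- The double-integral functional whose time derivatives we track. -/
def Rj (f : ℝ → ℝ) (j : ℕ) (s : ℝ) : ℝ :=
  ∫ p : ℝ × ℝ, f p.1 * f p.2 * gke j (2 * s) (p.2 - p.1)

lemma Rj_aesm (hfm : Measurable f) (j : ℕ) (s : ℝ) :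
    AEStronglyMeasurable (fun p : ℝ × ℝ => f p.1 * f p.2 * gke j (2 * s) (p.2 - p.1))
      (volume : Measure (ℝ × ℝ)) := by
  apply Measurable.aestronglyMeasurable
  exact ((hfm.comp measurable_fst).mul (hfm.comp measurable_snd)).mul
    ((gke_continuous j (2*s)).measurable.comp (measurable_snd.sub measurable_fst))

lemma Rj_integrable (hfm : Measurable f) (hf : Integrable f) (j : ℕ) {s : ℝ} (hs : 0 < s) :
    Integrable (fun p : ℝ × ℝ => f p.1 * f p.2 * gke j (2 * s) (p.2 - p.1)) := by
  obtain ⟨M, hM0, hM⟩ := gke_bound j (by linarith : (0:ℝ) < 2 * s) le_rfl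
  have hgint : Integrable (fun p : ℝ × ℝ => |f p.1| * |f p.2| * M) volume := by
    have h := (hf.abs.mul_prod hf.abs).mul_const M
    have hvol : (volume : Measure (ℝ × ℝ)) = (volume : Measure ℝ).prod volume :=
      MeasureTheory.Measure.volume_eq_prod ℝ ℝ
    rwa [← hvol] at h
  refine hgint.mono' (Rj_aesm hfm j s) ?_
  refine Filter.Eventually.of_forall fun p => ?_
  rw [Real.norm_eq_abs, abs_mul, abs_mul]
  exact mul_le_mul_of_nonneg_left (hM (2*s) ⟨le_rfl, le_rfl⟩ (p.2 - p.1))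
    (mul_nonneg (abs_nonneg _) (abs_nonneg _))

lemma hasDerivAt_Rj (hfm : Measurable f) (hf : Integrable f) (j : ℕ) {t : ℝ} (ht : 0 < t) :
    HasDerivAt (Rj f j) (Rj f (j + 2) t) t := by
  obtain ⟨M, hM0, hM⟩ := gke_bound (j + 2) (by linarith : (0:ℝ) < t) (by linarith : t ≤ 3 * t)
  have hball : ∀ s' ∈ Metric.ball t (t / 2), 0 < s' ∧ 2 * s' ∈ Set.Icc t (3 * t) := by
    intro s' hs'
    rw [Metric.mem_ball, Real.dist_eq, abs_sub_lt_iff] at hs'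
    constructor
    · linarith [hs'.1, hs'.2]
    · constructor <;> [linarith [hs'.2]; linarith [hs'.1]]
  have hvol : (volume : Measure (ℝ × ℝ)) = (volume : Measure ℝ).prod volume :=
    MeasureTheory.Measure.volume_eq_prod ℝ ℝ
  have hdd := hasDerivAt_integral_of_dominated_loc_of_deriv_le
    (μ := (volume : Measure (ℝ × ℝ)))
    (F := fun s' (p : ℝ × ℝ) => f p.1 * f p.2 * gke j (2 * s') (p.2 - p.1))
    (F' := fun s' (p : ℝ × ℝ) => f p.1 * f p.2 * gke (j + 2) (2 * s') (p.2 - p.1))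
    (bound := fun p : ℝ × ℝ => |f p.1| * |f p.2| * M)
    (x₀ := t) (s := Metric.ball t (t / 2)) (Metric.ball_mem_nhds _ (by linarith))
    (Filter.Eventually.of_forall fun s' => Rj_aesm hfm j s')
    (Rj_integrable hfm hf j ht)
    (Rj_aesm hfm (j + 2) t)
    (Filter.Eventually.of_forall fun p => fun s' hs' => by
      rw [Real.norm_eq_abs, abs_mul, abs_mul]
      exact mul_le_mul_of_nonneg_left (hM (2 * s') (hball s' hs').2 (p.2 - p.1))
        (mul_nonneg (abs_nonneg _) (abs_nonneg _)))
    (show Integrable (fun p : ℝ × ℝ => |f p.1| * |f p.2| * M) volume by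
      have h := (hf.abs.mul_prod hf.abs).mul_const M
      rwa [← hvol] at h)
    (Filter.Eventually.of_forall fun p => fun s' hs' => by
      have h2s : 0 < 2 * s' := by linarith [(hball s' hs').1]
      have hinner : HasDerivAt (fun s' : ℝ => 2 * s') (2 : ℝ) s' := by
        simpa using (hasDerivAt_id s').const_mul (2:ℝ)
      have houter := (gke_hasDerivAt_s j (p.2 - p.1) h2s).comp s' hinner
      have := houter.const_mul (f p.1 * f p.2)
      have harr : f p.1 * f p.2 * (1 / 2 * gke (j + 2) (2 * s') (p.2 - p.1) * 2)
          = f p.1 * f p.2 * gke (j + 2) (2 * s') (p.2 - p.1) := by ring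
      rw [harr] at this
      exact this)
  exact hdd.2

lemma iterate_deriv_congr {g h : ℝ → ℝ} {U : Set ℝ} (hU : IsOpen U)
    (he : ∀ x ∈ U, g x = h x) :
    ∀ k, ∀ x ∈ U, deriv^[k] g x = deriv^[k] h x := by
  intro k
  induction k with
  | zero => exact he
  | succ n ih =>
    intro x hx
    rw [Function.iterate_succ_apply', Function.iterate_succ_apply']
    apply Filter.EventuallyEq.deriv_eq
    exact Filter.eventually_of_mem (hU.mem_nhds hx) fun y hy => ih y hy

lemma iterate_deriv_neg (h : ℝ → ℝ) :
    ∀ k, deriv^[k] (fun s => -h s) = fun x => -(deriv^[k] h x) := by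
  intro k
  induction k generalizing h with
  | zero => rfl
  | succ n ih =>
    rw [Function.iterate_succ_apply, Function.iterate_succ_apply]
    have : deriv (fun s => -h s) = fun x => -(deriv h x) := deriv.neg'
    rw [this, ih (deriv h)]

lemma hR_iter (hfm : Measurable f) (hf : Integrable f) :
    ∀ (k j : ℕ) {t : ℝ}, 0 < t → deriv^[k] (Rj f j) t = Rj f (j + 2 * k) t := by
  intro k
  induction k with
  | zero => intro j t ht; simp
  | succ n ih =>
    intro j t ht
    rw [Function.iterate_succ_apply]
    have hcong : ∀ x ∈ Set.Ioi (0:ℝ), deriv (Rj f j) x = Rj f (j + 2) x :=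
      fun x hx => (hasDerivAt_Rj hfm hf j hx).deriv
    rw [iterate_deriv_congr isOpen_Ioi hcong n t ht, ih (j + 2) ht]
    congr 1
    omega

end HeatCM
namespace HeatCM
open Polynomial Real Filter MeasureTheory

variable {f : ℝ → ℝ}

lemma integrable_of_integral_one (hf1 : (∫ x : ℝ, f x) = 1) : Integrable f := by
  by_contra h
  rw [MeasureTheory.integral_undef h] at hf1
  exact one_ne_zero hf1.symm

lemma tsallis_eq (hfm : Measurable f) (hf : Integrable f) {s : ℝ} (hs : 0 < s) :
    tsallisEnt f 2 s = 1 - Rj f 0 s := by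
  rw [tsallisEnt, if_neg (by norm_num : (2:ℝ) ≠ 1)]
  have h1 : (∫ x : ℝ, heatP f s x ^ (2:ℝ)) = ∫ x, (cnv f 0 s x) ^ 2 := by
    congr 1
    funext x
    rw [show (2:ℝ) = ((2:ℕ):ℝ) by norm_num, Real.rpow_natCast, heatP_eq_cnv hs]
  have h2 := sq_integral_eq hfm hf 0 hs
  rw [h1, h2]
  have h3 : (∫ p : ℝ × ℝ, f p.1 * f p.2 * gke (2 * 0) (2 * s) (p.2 - p.1)) = Rj f 0 s := by
    rw [Rj]
  rw [pow_zero, one_mul, h3]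
  norm_num

end HeatCM

open HeatCM MeasureTheory in
theorem tsallis_two_CM_aux
    (f : ℝ → ℝ) (hfm : Measurable f) (hf0 : ∀ x, 0 ≤ f x)
    (hf1 : (∫ x : ℝ, f x) = 1) :
    ∀ k : ℕ, 1 ≤ k → ∀ t : ℝ, 0 < t →
      iteratedDeriv k (fun s => tsallisEnt f 2 s) t
          = (-1 : ℝ) ^ (k - 1) * (∫ x : ℝ, (pk f k t x) ^ 2)
      ∧ 0 ≤ (-1 : ℝ) ^ (k - 1) * iteratedDeriv k (fun s => tsallisEnt f 2 s) t := by
  intro k hk t ht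
  have hf : Integrable f := integrable_of_integral_one hf1
  obtain ⟨m, rfl⟩ : ∃ m, k = m + 1 := ⟨k - 1, by omega⟩
  set I : ℝ := ∫ x : ℝ, (pk f (m + 1) t x) ^ 2 with hI
  have hInn : 0 ≤ I := integral_nonneg fun x => sq_nonneg _
  have key : iteratedDeriv (m + 1) (fun s => tsallisEnt f 2 s) t
      = -(Rj f (2 * (m + 1)) t) := by
    rw [iteratedDeriv_eq_iterate]
    rw [iterate_deriv_congr isOpen_Ioi
      (fun x hx => tsallis_eq hfm hf hx) (m + 1) t ht]
    rw [Function.iterate_succ_apply]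
    have hd : ∀ x ∈ Set.Ioi (0:ℝ),
        deriv (fun s => 1 - Rj f 0 s) x = -(Rj f 2 x) := by
      intro x hx
      have h := ((hasDerivAt_const x (1:ℝ)).sub (hasDerivAt_Rj hfm hf 0 hx)).deriv
      exact h.trans (zero_sub _)
    rw [iterate_deriv_congr isOpen_Ioi hd m t ht]
    rw [iterate_deriv_neg (Rj f 2) m]
    show -(deriv^[m] (Rj f 2) t) = -(Rj f (2 * (m + 1)) t)
    rw [hR_iter hfm hf m 2 ht]
    have : 2 + 2 * m = 2 * (m + 1) := by omega
    rw [this]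
  have hsq : Rj f (2 * (m + 1)) t = (-1 : ℝ) ^ (m + 1) * I := by
    have h := sq_integral_eq hfm hf (m + 1) ht
    have h3 : (∫ p : ℝ × ℝ, f p.1 * f p.2 * gke (2 * (m + 1)) (2 * t) (p.2 - p.1))
        = Rj f (2 * (m + 1)) t := by rw [Rj]
    rw [h3] at h
    have hpkcnv : I = ∫ x, (cnv f (m + 1) t x) ^ 2 := by
      rw [hI]
      congr 1
      funext x
      rw [pk_eq_cnv hfm hf (m + 1) ht x]
    have hone : ((-1 : ℝ) ^ (m + 1)) * ((-1 : ℝ) ^ (m + 1)) = 1 := by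
      rw [← mul_pow]
      norm_num
    calc Rj f (2 * (m + 1)) t
        = (((-1 : ℝ) ^ (m + 1)) * ((-1 : ℝ) ^ (m + 1))) * Rj f (2 * (m + 1)) t := by
          rw [hone, one_mul]
      _ = ((-1 : ℝ) ^ (m + 1)) * (((-1 : ℝ) ^ (m + 1)) * Rj f (2 * (m + 1)) t) := by ring
      _ = ((-1 : ℝ) ^ (m + 1)) * I := by rw [← h, hpkcnv]
  constructor
  · rw [key, hsq]
    have hm : m + 1 - 1 = m := rfl
    rw [hm, pow_succ]
    ring
  · rw [key, hsq]
    have hm : m + 1 - 1 = m := rfl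
    rw [hm]
    have hcalc : ((-1 : ℝ)) ^ m * -((-1 : ℝ) ^ (m + 1) * I)
        = (((-1 : ℝ) * -1) ^ m) * I := by
      rw [pow_succ, mul_pow]
      ring
    rw [hcalc]
    norm_num
    exact hInn

/-- Complete monotonicity of the Tsallis entropy of order 2 along the heat flow:
for every k ≥ 1 the k-th time-derivative equals (-1)^(k-1) ∫ p_k², which is of sign
(-1)^(k-1). -/
theorem tsallis_two_completely_monotone
    (f : ℝ → ℝ) (hfm : Measurable f) (hf0 : ∀ x, 0 ≤ f x)
    (hf1 : (∫ x : ℝ, f x) = 1) :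
    ∀ k : ℕ, 1 ≤ k → ∀ t : ℝ, 0 < t →
      iteratedDeriv k (fun s => tsallisEnt f 2 s) t
          = (-1 : ℝ) ^ (k - 1) * (∫ x : ℝ, (pk f k t x) ^ 2)
      ∧ 0 ≤ (-1 : ℝ) ^ (k - 1) * iteratedDeriv k (fun s => tsallisEnt f 2 s) t := by
  exact tsallis_two_CM_aux f hfm hf0 hf1
end
end

section
/- Let α ∈ (0,∞), let r be a positive integer, let n₁,…,n_r and k₁,…,k_r be positive integers, let 0 < a < b < ∞ and ε > 0. Then there exists a constant C (depending only on α, a, b, ε and (n_i, k_i)_{i=1}^r) such that for all t ∈ [a,b] and all x ∈ ℝ, p(x,t)^α · ∏_{i=1}^r |p^{(n_i)}(x,t)/p(x,t)|^{k_i} ≤ C · p(x, b+ε)^α. In particular, for each t ∈ [a,b], p(x,t)^α · ∏_{i=1}^r (p^{(n_i)}(x,t)/p(x,t))^{k_i} → 0 as |x| → ∞. -/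
open MeasureTheory Real Filter
open scoped Classical

/-- The Gaussian heat kernel. -/
noncomputable def gK (t z : ℝ) : ℝ :=
  (Real.sqrt (2 * Real.pi * t))⁻¹ * Real.exp (-z ^ 2 / (2 * t))

lemma gK_def (t z : ℝ) :
    gK t z = (Real.sqrt (2 * Real.pi * t))⁻¹ * Real.exp (-z ^ 2 / (2 * t)) := rfl

lemma two_pi_t_pos {t : ℝ} (ht : 0 < t) : 0 < 2 * Real.pi * t := by
  have := Real.pi_pos; nlinarith

lemma sqrt_two_pi_t_pos {t : ℝ} (ht : 0 < t) : 0 < Real.sqrt (2 * Real.pi * t) :=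
  Real.sqrt_pos.2 (two_pi_t_pos ht)

lemma gK_pos {t : ℝ} (ht : 0 < t) (z : ℝ) : 0 < gK t z :=
  mul_pos (inv_pos.2 (sqrt_two_pi_t_pos ht)) (Real.exp_pos _)

lemma gK_le {t : ℝ} (ht : 0 < t) (z : ℝ) : gK t z ≤ (Real.sqrt (2 * Real.pi * t))⁻¹ := by
  have h1 : Real.exp (-z ^ 2 / (2 * t)) ≤ 1 := by
    rw [Real.exp_le_one_iff]
    have hz : 0 ≤ z ^ 2 := sq_nonneg z
    have h2t : 0 < 2 * t := by linarith
    exact div_nonpos_iff.2 (Or.inr ⟨by linarith, h2t.le⟩)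
  calc gK t z ≤ (Real.sqrt (2 * Real.pi * t))⁻¹ * 1 :=
        mul_le_mul_of_nonneg_left h1 (inv_nonneg.2 (sqrt_two_pi_t_pos ht).le)
    _ = _ := mul_one _

lemma continuous_gK (t : ℝ) : Continuous (gK t) := by
  unfold gK
  exact continuous_const.mul (((continuous_pow 2).neg.div_const _).rexp)

/-- `(exp u) ^ λ = exp (λ u)` for rpow. -/
lemma exp_rpow' (u lam : ℝ) : (Real.exp u) ^ lam = Real.exp (lam * u) := by
  rw [← Real.exp_mul, mul_comm]

lemma gK_rpow {t : ℝ} (ht : 0 < t) (z lam : ℝ) :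
    gK t z ^ lam
      = ((Real.sqrt (2 * Real.pi * t))⁻¹) ^ lam * Real.exp (lam * (-z ^ 2 / (2 * t))) := by
  rw [gK_def, Real.mul_rpow (inv_nonneg.2 (sqrt_two_pi_t_pos ht).le) (Real.exp_nonneg _),
    exp_rpow']

/-- The family of polynomials governing the derivatives of the heat kernel. -/
noncomputable def Qp : ℕ → ℝ → Polynomial ℝ
  | 0, _ => 1
  | n + 1, t => Polynomial.derivative (Qp n t) - Polynomial.C t⁻¹ * Polynomial.X * Qp n t

lemma hasDerivAt_poly_gK {t : ℝ} (ht : 0 < t) (p : Polynomial ℝ) (z : ℝ) :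
    HasDerivAt (fun w => p.eval w * gK t w)
      ((Polynomial.derivative p - Polynomial.C t⁻¹ * Polynomial.X * p).eval z * gK t z) z := by
  have hne : (2 : ℝ) * t ≠ 0 := by positivity
  have h1 : HasDerivAt (fun w : ℝ => -w ^ 2 / (2 * t)) (-(2 * z) / (2 * t)) z := by
    simpa using ((hasDerivAt_pow 2 z).neg.div_const (2 * t))
  have hexp := h1.exp
  have hg : HasDerivAt (gK t)
      ((Real.sqrt (2 * Real.pi * t))⁻¹ * (Real.exp (-z ^ 2 / (2 * t)) * (-(2 * z) / (2 * t)))) z :=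
    hexp.const_mul _
  have hp : HasDerivAt (fun w => p.eval w) ((Polynomial.derivative p).eval z) z :=
    p.hasDerivAt z
  have := hp.mul hg
  refine this.congr_deriv ?_
  simp only [gK_def, Polynomial.eval_sub, Polynomial.eval_mul, Polynomial.eval_C,
    Polynomial.eval_X]
  field_simp
  ring

lemma hasDerivAt_Qp_gK {t : ℝ} (ht : 0 < t) (m : ℕ) (z : ℝ) :
    HasDerivAt (fun w => (Qp m t).eval w * gK t w) ((Qp (m + 1) t).eval z * gK t z) z := by
  have := hasDerivAt_poly_gK ht (Qp m t) z
  simpa [Qp] using this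

/-- Polynomial evaluation bound via coefficient bounds. -/
lemma abs_eval_le' (p : Polynomial ℝ) (nn : ℕ) (C : ℝ) (hd : p.natDegree ≤ nn)
    (hc : ∀ i, |p.coeff i| ≤ C) (z : ℝ) :
    |p.eval z| ≤ ((nn : ℝ) + 1) * C * (1 + |z|) ^ nn := by
  have hC0 : 0 ≤ C := le_trans (abs_nonneg _) (hc 0)
  have h1z : (1 : ℝ) ≤ 1 + |z| := by simp [abs_nonneg]
  rw [Polynomial.eval_eq_sum_range' (lt_of_le_of_lt hd (Nat.lt_succ_self nn))]
  calc |∑ i ∈ Finset.range (nn + 1), p.coeff i * z ^ i|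
      ≤ ∑ i ∈ Finset.range (nn + 1), |p.coeff i * z ^ i| := Finset.abs_sum_le_sum_abs _ _
    _ ≤ ∑ _i ∈ Finset.range (nn + 1), C * (1 + |z|) ^ nn := by
        apply Finset.sum_le_sum
        intro i hi
        rw [abs_mul, abs_pow]
        have h1 : |z| ^ i ≤ (1 + |z|) ^ i :=
          pow_le_pow_left₀ (abs_nonneg z) (by linarith) i
        have hile : i ≤ nn := by have := Finset.mem_range.1 hi; omega
        have h2 : (1 + |z|) ^ i ≤ (1 + |z|) ^ nn :=
          pow_le_pow_right₀ h1z hile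
        exact mul_le_mul (hc i) (h1.trans h2) (pow_nonneg (abs_nonneg z) i) hC0
    _ = ((nn : ℝ) + 1) * C * (1 + |z|) ^ nn := by
        rw [Finset.sum_const, Finset.card_range, nsmul_eq_mul]
        push_cast; ring

/-- `(1+|z|)^n ≤ exp(n²/(4η)) exp(η z²)`. -/
lemma one_add_abs_pow_le (nn : ℕ) {η : ℝ} (hη : 0 < η) (z : ℝ) :
    (1 + |z|) ^ nn ≤ Real.exp ((nn : ℝ) ^ 2 / (4 * η)) * Real.exp (η * z ^ 2) := by
  have h1 : (1 + |z|) ^ nn ≤ Real.exp ((nn : ℝ) * |z|) := by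
    calc (1 + |z|) ^ nn ≤ (Real.exp |z|) ^ nn :=
          pow_le_pow_left₀ (by positivity) (by simpa [add_comm] using Real.add_one_le_exp |z|) nn
      _ = Real.exp ((nn : ℝ) * |z|) := by rw [← Real.exp_nat_mul]
  refine h1.trans ?_
  rw [← Real.exp_add]
  apply Real.exp_le_exp.2
  have h4 : (0 : ℝ) < 4 * η := by positivity
  rw [← sub_le_iff_le_add, le_div_iff₀ h4]
  have habs : z ^ 2 = |z| ^ 2 := (sq_abs z).symm
  rw [habs]
  nlinarith [sq_nonneg (2 * η * |z| - (nn : ℝ))]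

/-- Uniform coefficient bounds for `Qp n t`, `t ∈ [a,b]`. -/
lemma Qp_coeff_bound (a b : ℝ) (ha : 0 < a) (n : ℕ) :
    ∃ C : ℝ, 0 < C ∧ ∀ t ∈ Set.Icc a b,
      (Qp n t).natDegree ≤ n ∧ ∀ i, |(Qp n t).coeff i| ≤ C := by
  induction n with
  | zero =>
      refine ⟨1, one_pos, fun t _ => ⟨by simp [Qp], fun i => ?_⟩⟩
      simp only [Qp, Polynomial.coeff_one]
      split <;> norm_num
  | succ n ih =>
      obtain ⟨C, hC0, hC⟩ := ih
      refine ⟨((n : ℝ) + 1) * C + a⁻¹ * C, by positivity, fun t ht => ?_⟩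
      obtain ⟨hdeg, hcoef⟩ := hC t ht
      have ht0 : 0 < t := lt_of_lt_of_le ha ht.1
      constructor
      · show (Polynomial.derivative (Qp n t) - Polynomial.C t⁻¹ * Polynomial.X * Qp n t).natDegree
          ≤ n + 1
        apply (Polynomial.natDegree_sub_le _ _).trans
        apply max_le
        · exact le_trans (Polynomial.natDegree_derivative_le _) (by omega)
        · apply (Polynomial.natDegree_mul_le).trans
          have h1 : (Polynomial.C t⁻¹ * Polynomial.X : Polynomial ℝ).natDegree ≤ 1 :=
            (Polynomial.natDegree_mul_le).trans
              (by simp [Polynomial.natDegree_C, Polynomial.natDegree_X])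
          omega
      · intro i
        show |(Polynomial.derivative (Qp n t)
            - Polynomial.C t⁻¹ * Polynomial.X * Qp n t).coeff i| ≤ _
        rw [Polynomial.coeff_sub, sub_eq_add_neg]
        refine (abs_add_le _ _).trans ?_
        rw [abs_neg]
        have h1 : |(Polynomial.derivative (Qp n t)).coeff i| ≤ ((n : ℝ) + 1) * C := by
          rw [Polynomial.coeff_derivative]
          by_cases hi : n < i + 1
          · rw [Polynomial.coeff_eq_zero_of_natDegree_lt (lt_of_le_of_lt hdeg hi)]
            simp [mul_nonneg (by positivity : (0:ℝ) ≤ (n:ℝ)+1) hC0.le]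
          · push_neg at hi
            rw [abs_mul]
            have h2 : |((i : ℝ) + 1)| ≤ (n : ℝ) + 1 := by
              rw [abs_of_nonneg (by positivity)]
              have : (i : ℝ) ≤ (n : ℝ) := by exact_mod_cast (by omega : i ≤ n)
              linarith
            calc |(Qp n t).coeff (i + 1)| * |((i : ℝ) + 1)|
                ≤ C * ((n : ℝ) + 1) :=
                  mul_le_mul (hcoef _) h2 (abs_nonneg _) hC0.le
              _ = ((n : ℝ) + 1) * C := by ring
        have h2 : |(Polynomial.C t⁻¹ * Polynomial.X * Qp n t).coeff i| ≤ a⁻¹ * C := by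
          rw [mul_assoc, Polynomial.coeff_C_mul, abs_mul]
          have hti : |t⁻¹| ≤ a⁻¹ := by
            rw [abs_of_nonneg (inv_nonneg.2 ht0.le)]
            exact inv_anti₀ ha ht.1
          have hXQ : |(Polynomial.X * Qp n t).coeff i| ≤ C := by
            cases i with
            | zero =>
                rw [Polynomial.mul_coeff_zero, Polynomial.coeff_X_zero, zero_mul, abs_zero]
                exact hC0.le
            | succ j => rw [Polynomial.coeff_X_mul]; exact hcoef j
          exact mul_le_mul hti hXQ (abs_nonneg _) (inv_nonneg.2 ha.le)
        linarith

/-- Global bound for polynomial times heat kernel (fixed `t`). -/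
lemma poly_gauss_bounded {t : ℝ} (ht : 0 < t) (p : Polynomial ℝ) :
    ∃ B : ℝ, ∀ z : ℝ, |p.eval z * gK t z| ≤ B := by
  set d := p.natDegree with hd
  set Cc := ∑ i ∈ Finset.range (d + 1), |p.coeff i| with hCc
  have hCc0 : 0 ≤ Cc := Finset.sum_nonneg fun i _ => abs_nonneg _
  have hcoef : ∀ i, |p.coeff i| ≤ Cc := by
    intro i
    by_cases hi : i < d + 1
    · exact Finset.single_le_sum (f := fun j => |p.coeff j|) (fun j _ => abs_nonneg (p.coeff j))
        (Finset.mem_range.2 hi)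
    · push_neg at hi
      rw [Polynomial.coeff_eq_zero_of_natDegree_lt (by omega)]
      simpa using hCc0
  have hη : (0 : ℝ) < (4 * t)⁻¹ := by positivity
  set E := Real.exp ((d : ℝ) ^ 2 / (4 * (4 * t)⁻¹)) with hE
  refine ⟨((d : ℝ) + 1) * Cc * E * (Real.sqrt (2 * Real.pi * t))⁻¹, fun z => ?_⟩
  have h0 : |p.eval z * gK t z| = |p.eval z| * gK t z := by
    rw [abs_mul, abs_of_pos (gK_pos ht z)]
  rw [h0]
  have h1 : |p.eval z| ≤ ((d : ℝ) + 1) * Cc * (1 + |z|) ^ d :=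
    abs_eval_le' p d Cc le_rfl hcoef z
  have h2 : (1 + |z|) ^ d ≤ E * Real.exp ((4 * t)⁻¹ * z ^ 2) :=
    one_add_abs_pow_le d hη z
  have h3 : Real.exp ((4 * t)⁻¹ * z ^ 2) * gK t z ≤ (Real.sqrt (2 * Real.pi * t))⁻¹ := by
    have heq : Real.exp ((4 * t)⁻¹ * z ^ 2) * gK t z
        = (Real.sqrt (2 * Real.pi * t))⁻¹ * Real.exp ((4 * t)⁻¹ * z ^ 2 + -z ^ 2 / (2 * t)) := by
      rw [gK_def, Real.exp_add]; ring
    rw [heq]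
    have : (4 * t)⁻¹ * z ^ 2 + -z ^ 2 / (2 * t) ≤ 0 := by
      rw [div_eq_mul_inv]
      have h4 : (4 * t)⁻¹ ≤ (2 * t)⁻¹ := by
        apply inv_anti₀ (by linarith) (by linarith)
      nlinarith [sq_nonneg z]
    calc (Real.sqrt (2 * Real.pi * t))⁻¹ * Real.exp ((4 * t)⁻¹ * z ^ 2 + -z ^ 2 / (2 * t))
        ≤ (Real.sqrt (2 * Real.pi * t))⁻¹ * 1 := by
          apply mul_le_mul_of_nonneg_left _ (inv_nonneg.2 (sqrt_two_pi_t_pos ht).le)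
          rw [Real.exp_le_one_iff]; exact this
      _ = _ := mul_one _
  calc |p.eval z| * gK t z
      ≤ (((d : ℝ) + 1) * Cc * (E * Real.exp ((4 * t)⁻¹ * z ^ 2))) * gK t z := by
        apply mul_le_mul_of_nonneg_right _ (gK_pos ht z).le
        exact h1.trans (mul_le_mul_of_nonneg_left h2 (by positivity))
    _ = ((d : ℝ) + 1) * Cc * E * (Real.exp ((4 * t)⁻¹ * z ^ 2) * gK t z) := by ring
    _ ≤ ((d : ℝ) + 1) * Cc * E * (Real.sqrt (2 * Real.pi * t))⁻¹ := by
        apply mul_le_mul_of_nonneg_left h3 (by positivity)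

section HeatP

variable {f : ℝ → ℝ}

lemma heatP_eq (f : ℝ → ℝ) (t x : ℝ) : heatP f t x = ∫ y : ℝ, f y * gK t (x - y) := rfl

lemma integrable_of_integral_one (hf1 : (∫ x : ℝ, f x) = 1) : Integrable f := by
  by_contra h
  rw [integral_undef h] at hf1
  exact one_ne_zero hf1.symm

/-- product of integrable and bounded measurable is integrable -/
lemma integrable_f_mul (hfi : Integrable f) {g : ℝ → ℝ} (hg : Measurable g) {B : ℝ}
    (hB : ∀ z, |g z| ≤ B) : Integrable (fun y => f y * g y) := by
  have := Integrable.bdd_mul hfi hg.aestronglyMeasurable (c := B) (Eventually.of_forall fun z => by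
    simpa [Real.norm_eq_abs] using hB z)
  simpa [mul_comm] using this

lemma integrable_conv (hfi : Integrable f) {t : ℝ} (ht : 0 < t) (x : ℝ) :
    Integrable (fun y => f y * gK t (x - y)) := by
  apply integrable_f_mul hfi
  · exact ((continuous_gK t).comp (continuous_const.sub continuous_id)).measurable
  · intro z
    rw [abs_of_pos (gK_pos ht _)]
    exact gK_le ht _

lemma integrable_conv_poly (hfi : Integrable f) {t : ℝ} (ht : 0 < t) (p : Polynomial ℝ) (x : ℝ) :
    Integrable (fun y => f y * (p.eval (x - y) * gK t (x - y))) := by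
  obtain ⟨B, hB⟩ := poly_gauss_bounded ht p
  apply integrable_f_mul hfi
  · exact ((p.continuous_aeval.mul (continuous_gK t)).comp
      (continuous_const.sub continuous_id)).measurable
  · intro z; exact hB _

lemma heatP_pos (hfm : Measurable f) (hf0 : ∀ x, 0 ≤ f x) (hf1 : (∫ x : ℝ, f x) = 1)
    {t : ℝ} (ht : 0 < t) (x : ℝ) : 0 < heatP f t x := by
  have hfi : Integrable f := integrable_of_integral_one hf1
  rw [heatP_eq]
  rw [integral_pos_iff_support_of_nonneg
    (fun y => mul_nonneg (hf0 y) (gK_pos ht _).le) (integrable_conv hfi ht x)]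
  have hsupp : (Function.support fun y => f y * gK t (x - y)) = Function.support f := by
    ext y
    simp only [Function.mem_support]
    constructor
    · intro h hf; exact h (by rw [hf, zero_mul])
    · intro h hc
      rcases mul_eq_zero.1 hc with h1 | h2
      · exact h h1
      · exact (gK_pos ht (x - y)).ne' h2
  rw [hsupp]
  have := (integral_pos_iff_support_of_nonneg hf0 hfi).1 (by rw [hf1]; exact one_pos)
  exact this

lemma heatP_le (hf0 : ∀ x, 0 ≤ f x) (hf1 : (∫ x : ℝ, f x) = 1) {t : ℝ} (ht : 0 < t) (x : ℝ) :
    heatP f t x ≤ (Real.sqrt (2 * Real.pi * t))⁻¹ := by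
  have hfi : Integrable f := integrable_of_integral_one hf1
  rw [heatP_eq]
  calc ∫ y : ℝ, f y * gK t (x - y)
      ≤ ∫ y : ℝ, f y * (Real.sqrt (2 * Real.pi * t))⁻¹ :=
        integral_mono (integrable_conv hfi ht x) (hfi.mul_const _)
          (fun y => mul_le_mul_of_nonneg_left (gK_le ht _) (hf0 y))
    _ = (∫ y : ℝ, f y) * (Real.sqrt (2 * Real.pi * t))⁻¹ := integral_mul_const _ _
    _ = (Real.sqrt (2 * Real.pi * t))⁻¹ := by rw [hf1, one_mul]

/-- monotone comparison of heatP at two times. -/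
lemma heatP_time_mono (hf0 : ∀ x, 0 ≤ f x) (hfi : Integrable f)
    {a t s : ℝ} (ha : 0 < a) (hat : a ≤ t) (hts : t ≤ s) (x : ℝ) :
    Real.sqrt (2 * Real.pi * a) * (Real.sqrt (2 * Real.pi * s))⁻¹ * heatP f t x
      ≤ heatP f s x := by
  have ht0 : 0 < t := lt_of_lt_of_le ha hat
  have hs0 : 0 < s := lt_of_lt_of_le ht0 hts
  have hgK : ∀ z : ℝ, Real.sqrt (2 * Real.pi * a) * (Real.sqrt (2 * Real.pi * s))⁻¹ * gK t z
      ≤ gK s z := by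
    intro z
    have h1 : Real.sqrt (2 * Real.pi * a) * (Real.sqrt (2 * Real.pi * t))⁻¹ ≤ 1 := by
      rw [← div_eq_mul_inv]
      apply div_le_one_of_le₀
      · exact Real.sqrt_le_sqrt (by nlinarith [Real.pi_pos])
      · exact (sqrt_two_pi_t_pos ht0).le
    have h2 : Real.exp (-z ^ 2 / (2 * t)) ≤ Real.exp (-z ^ 2 / (2 * s)) := by
      apply Real.exp_le_exp.2
      rw [neg_div, neg_div, neg_le_neg_iff]
      exact div_le_div_of_nonneg_left (sq_nonneg z) (by linarith) (by linarith)
    have heq : Real.sqrt (2 * Real.pi * a) * (Real.sqrt (2 * Real.pi * s))⁻¹ * gK t z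
        = (Real.sqrt (2 * Real.pi * s))⁻¹
          * ((Real.sqrt (2 * Real.pi * a) * (Real.sqrt (2 * Real.pi * t))⁻¹)
            * Real.exp (-z ^ 2 / (2 * t))) := by
      rw [gK_def]; ring
    rw [heq, gK_def]
    apply mul_le_mul_of_nonneg_left _ (inv_nonneg.2 (sqrt_two_pi_t_pos hs0).le)
    calc Real.sqrt (2 * Real.pi * a) * (Real.sqrt (2 * Real.pi * t))⁻¹
          * Real.exp (-z ^ 2 / (2 * t))
        ≤ 1 * Real.exp (-z ^ 2 / (2 * s)) :=
          mul_le_mul h1 h2 (Real.exp_pos _).le zero_le_one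
      _ = Real.exp (-z ^ 2 / (2 * s)) := one_mul _
  rw [heatP_eq, heatP_eq, ← integral_const_mul]
  apply integral_mono ((integrable_conv hfi ht0 x).const_mul _) (integrable_conv hfi hs0 x)
  intro y
  simp only
  calc Real.sqrt (2 * Real.pi * a) * (Real.sqrt (2 * Real.pi * s))⁻¹ * (f y * gK t (x - y))
      = f y * (Real.sqrt (2 * Real.pi * a) * (Real.sqrt (2 * Real.pi * s))⁻¹ * gK t (x - y)) := by
        ring
    _ ≤ f y * gK s (x - y) := mul_le_mul_of_nonneg_left (hgK _) (hf0 y)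

end HeatP


section Kernel

/-- Core exponential comparison: for `a ≤ t ≤ b < s`,
`exp(η z²)·gK t z ≤ ρ^λ · gK s z^λ · gK t z^(1-λ)`. -/
lemma kernel_exp_compare {a b s lam : ℝ} (ha : 0 < a) (hbs : b < s)
    (hl0 : 0 ≤ lam) (hl1 : lam ≤ 1) {t : ℝ} (hat : a ≤ t) (htb : t ≤ b) (z : ℝ) :
    Real.exp ((lam * ((2 * b)⁻¹ - (2 * s)⁻¹)) * z ^ 2) * gK t z
      ≤ (Real.sqrt (2 * Real.pi * s) * (Real.sqrt (2 * Real.pi * a))⁻¹) ^ lam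
        * (gK s z ^ lam * gK t z ^ (1 - lam)) := by
  have ht0 : 0 < t := lt_of_lt_of_le ha hat
  have hb0 : 0 < b := lt_of_lt_of_le ht0 htb
  have hs0 : 0 < s := lt_trans hb0 hbs
  set It := (Real.sqrt (2 * Real.pi * t))⁻¹ with hIt
  set Is := (Real.sqrt (2 * Real.pi * s))⁻¹ with hIs
  set Ia := (Real.sqrt (2 * Real.pi * a))⁻¹ with hIa
  set ρ := Real.sqrt (2 * Real.pi * s) * (Real.sqrt (2 * Real.pi * a))⁻¹ with hρ
  have hIt0 : 0 < It := inv_pos.2 (sqrt_two_pi_t_pos ht0)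
  have hIs0 : 0 < Is := inv_pos.2 (sqrt_two_pi_t_pos hs0)
  have hIa0 : 0 < Ia := inv_pos.2 (sqrt_two_pi_t_pos ha)
  have hρ0 : 0 < ρ := mul_pos (sqrt_two_pi_t_pos hs0) hIa0
  set η := lam * ((2 * b)⁻¹ - (2 * s)⁻¹) with hη
  -- rewrite both sides
  have hLHS : Real.exp (η * z ^ 2) * gK t z = It * Real.exp (η * z ^ 2 + -z ^ 2 / (2 * t)) := by
    rw [gK_def, Real.exp_add]; ring
  have hRHS : ρ ^ lam * (gK s z ^ lam * gK t z ^ (1 - lam))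
      = (ρ ^ lam * Is ^ lam * It ^ (1 - lam))
        * Real.exp (lam * (-z ^ 2 / (2 * s)) + (1 - lam) * (-z ^ 2 / (2 * t))) := by
    rw [gK_rpow hs0, gK_rpow ht0, Real.exp_add]; ring
  rw [hLHS, hRHS]
  have hconst : It ≤ ρ ^ lam * Is ^ lam * It ^ (1 - lam) := by
    have h1 : It = It ^ lam * It ^ (1 - lam) := by
      rw [← Real.rpow_add hIt0]; norm_num
    have h2 : It ^ lam ≤ Ia ^ lam := by
      apply Real.rpow_le_rpow hIt0.le _ hl0
      rw [hIt, hIa]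
      apply inv_anti₀ (sqrt_two_pi_t_pos ha)
      exact Real.sqrt_le_sqrt (by nlinarith [Real.pi_pos])
    have h3 : ρ * Is = Ia := by
      rw [hρ, hIs, hIa]
      field_simp
    have h4 : Ia ^ lam = ρ ^ lam * Is ^ lam := by
      rw [← Real.mul_rpow hρ0.le hIs0.le, h3]
    calc It = It ^ lam * It ^ (1 - lam) := h1
      _ ≤ Ia ^ lam * It ^ (1 - lam) :=
          mul_le_mul_of_nonneg_right h2 (Real.rpow_nonneg hIt0.le _)
      _ = ρ ^ lam * Is ^ lam * It ^ (1 - lam) := by rw [h4]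
  have hexp : η * z ^ 2 + -z ^ 2 / (2 * t)
      ≤ lam * (-z ^ 2 / (2 * s)) + (1 - lam) * (-z ^ 2 / (2 * t)) := by
    have hinv : (2 * b)⁻¹ ≤ (2 * t)⁻¹ := inv_anti₀ (by linarith) (by linarith)
    have hnn : 0 ≤ lam * (z ^ 2 * ((2 * t)⁻¹ - (2 * b)⁻¹)) :=
      mul_nonneg hl0 (mul_nonneg (sq_nonneg z) (by linarith))
    have hkey : η * z ^ 2 + -z ^ 2 / (2 * t)
        - (lam * (-z ^ 2 / (2 * s)) + (1 - lam) * (-z ^ 2 / (2 * t)))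
        = -(lam * (z ^ 2 * ((2 * t)⁻¹ - (2 * b)⁻¹))) := by
      rw [hη]
      field_simp
      ring
    linarith
  exact mul_le_mul hconst (Real.exp_le_exp.2 hexp) (Real.exp_pos _).le
    (by positivity)

/-- The kernel comparison: uniform in `t ∈ [a,b]`. -/
lemma kernel_compare {a b s lam : ℝ} (ha : 0 < a) (hab : a ≤ b) (hbs : b < s)
    (hl0 : 0 < lam) (hl1 : lam < 1) (m : ℕ) :
    ∃ C : ℝ, 0 < C ∧ ∀ t ∈ Set.Icc a b, ∀ z : ℝ,
      |(Qp m t).eval z * gK t z| ≤ C * (gK s z ^ lam * gK t z ^ (1 - lam)) := by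
  obtain ⟨D, hD0, hD⟩ := Qp_coeff_bound a b ha m
  have hb0 : 0 < b := lt_of_lt_of_le ha hab
  have hs0 : 0 < s := lt_trans hb0 hbs
  set η := lam * ((2 * b)⁻¹ - (2 * s)⁻¹) with hηdef
  have hη : 0 < η := by
    apply mul_pos hl0
    have : (2 * s)⁻¹ < (2 * b)⁻¹ := by
      apply inv_strictAnti₀ (by linarith) (by linarith)
    linarith
  set E := Real.exp ((m : ℝ) ^ 2 / (4 * η)) with hE
  have hE0 : 0 < E := Real.exp_pos _
  set ρ := Real.sqrt (2 * Real.pi * s) * (Real.sqrt (2 * Real.pi * a))⁻¹ with hρ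
  have hρ0 : 0 < ρ :=
    mul_pos (sqrt_two_pi_t_pos hs0) (inv_pos.2 (sqrt_two_pi_t_pos ha))
  refine ⟨((m : ℝ) + 1) * D * E * ρ ^ lam, by positivity, fun t ht z => ?_⟩
  obtain ⟨hdeg, hcoef⟩ := hD t ht
  have ht0 : 0 < t := lt_of_lt_of_le ha ht.1
  have h1 : |(Qp m t).eval z * gK t z| = |(Qp m t).eval z| * gK t z := by
    rw [abs_mul, abs_of_pos (gK_pos ht0 z)]
  rw [h1]
  have h2 : |(Qp m t).eval z| ≤ ((m : ℝ) + 1) * D * (1 + |z|) ^ m :=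
    abs_eval_le' _ m D hdeg hcoef z
  have h3 : (1 + |z|) ^ m ≤ E * Real.exp (η * z ^ 2) := one_add_abs_pow_le m hη z
  have h4 : Real.exp (η * z ^ 2) * gK t z ≤ ρ ^ lam * (gK s z ^ lam * gK t z ^ (1 - lam)) :=
    kernel_exp_compare ha hbs hl0.le hl1.le ht.1 ht.2 z
  calc |(Qp m t).eval z| * gK t z
      ≤ (((m : ℝ) + 1) * D * (E * Real.exp (η * z ^ 2))) * gK t z := by
        apply mul_le_mul_of_nonneg_right _ (gK_pos ht0 z).le
        exact h2.trans (mul_le_mul_of_nonneg_left h3 (by positivity))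
    _ = ((m : ℝ) + 1) * D * E * (Real.exp (η * z ^ 2) * gK t z) := by ring
    _ ≤ ((m : ℝ) + 1) * D * E * (ρ ^ lam * (gK s z ^ lam * gK t z ^ (1 - lam))) := by
        apply mul_le_mul_of_nonneg_left h4 (by positivity)
    _ = ((m : ℝ) + 1) * D * E * ρ ^ lam * (gK s z ^ lam * gK t z ^ (1 - lam)) := by ring

end Kernel


section Deriv

variable {f : ℝ → ℝ}

lemma measurable_conv_poly (hfm : Measurable f) (t : ℝ) (p : Polynomial ℝ) (x : ℝ) :
    AEStronglyMeasurable (fun y => f y * (p.eval (x - y) * gK t (x - y)))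
      (volume : Measure ℝ) := by
  apply Measurable.aestronglyMeasurable
  exact hfm.mul (((p.continuous_aeval.mul (continuous_gK t)).comp
    (continuous_const.sub continuous_id)).measurable)

lemma hasDerivAt_conv (hfm : Measurable f) (hfi : Integrable f) {t : ℝ} (ht : 0 < t)
    (m : ℕ) (x : ℝ) :
    HasDerivAt (fun x' => ∫ y : ℝ, f y * ((Qp m t).eval (x' - y) * gK t (x' - y)))
      (∫ y : ℝ, f y * ((Qp (m + 1) t).eval (x - y) * gK t (x - y))) x := by
  obtain ⟨B, hB⟩ := poly_gauss_bounded ht (Qp (m + 1) t)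
  have hB0 : 0 ≤ B := (abs_nonneg _).trans (hB 0)
  refine (hasDerivAt_integral_of_dominated_loc_of_deriv_le
    (F := fun x' (y : ℝ) => f y * ((Qp m t).eval (x' - y) * gK t (x' - y)))
    (F' := fun x' (y : ℝ) => f y * ((Qp (m + 1) t).eval (x' - y) * gK t (x' - y)))
    (bound := fun y => |f y| * B) (Metric.ball_mem_nhds x one_pos) ?_ ?_ ?_ ?_ ?_ ?_).2
  · exact Eventually.of_forall fun x' => measurable_conv_poly hfm t _ x'
  · exact integrable_conv_poly hfi ht _ x
  · exact measurable_conv_poly hfm t _ x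
  · apply Eventually.of_forall
    intro y x' _
    rw [Real.norm_eq_abs, abs_mul]
    exact mul_le_mul_of_nonneg_left (hB _) (abs_nonneg _)
  · exact hfi.abs.mul_const B
  · apply Eventually.of_forall
    intro y x' _
    have h1 : HasDerivAt (fun w : ℝ => w - y) 1 x' := (hasDerivAt_id x').sub_const y
    have h2 := (hasDerivAt_Qp_gK ht m (x' - y)).comp x' h1
    have h3 := h2.const_mul (f y)
    simpa using h3

lemma pk_eq (hfm : Measurable f) (hfi : Integrable f) {t : ℝ} (ht : 0 < t) (m : ℕ) :
    iteratedDeriv m (heatP f t)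
      = fun x => ∫ y : ℝ, f y * ((Qp m t).eval (x - y) * gK t (x - y)) := by
  induction m with
  | zero =>
      funext x
      rw [iteratedDeriv_zero, heatP_eq]
      simp [Qp]
  | succ m ih =>
      funext x
      rw [iteratedDeriv_succ, ih]
      exact (hasDerivAt_conv hfm hfi ht m x).deriv

lemma pk_formula (hfm : Measurable f) (hfi : Integrable f) {t : ℝ} (ht : 0 < t) (m : ℕ)
    (x : ℝ) :
    pk f m t x = ∫ y : ℝ, f y * ((Qp m t).eval (x - y) * gK t (x - y)) := by
  show iteratedDeriv m (heatP f t) x = _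
  rw [pk_eq hfm hfi ht m]

end Deriv


section Holder

variable {f : ℝ → ℝ}

lemma gK_rpow_le {t : ℝ} (ht : 0 < t) {lam : ℝ} (hl0 : 0 ≤ lam) (z : ℝ) :
    gK t z ^ lam ≤ ((Real.sqrt (2 * Real.pi * t))⁻¹) ^ lam :=
  Real.rpow_le_rpow (gK_pos ht z).le (gK_le ht z) hl0

lemma measurable_gK_rpow {t : ℝ} (ht : 0 < t) (lam : ℝ) :
    Measurable (fun z => gK t z ^ lam) :=
  ((continuous_gK t).rpow_const (fun z => Or.inl (gK_pos ht z).ne')).measurable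

/-- Hölder-type inequality for the convolution, via weighted AM-GM. -/
lemma holder_conv (hfm : Measurable f) (hf0 : ∀ x, 0 ≤ f x) (hfi : Integrable f)
    {t s lam x : ℝ} (ht : 0 < t) (hs : 0 < s) (hl0 : 0 ≤ lam) (hl1 : lam ≤ 1)
    (hPt : 0 < heatP f t x) (hPs : 0 < heatP f s x) :
    ∫ y : ℝ, f y * (gK s (x - y) ^ lam * gK t (x - y) ^ (1 - lam))
      ≤ heatP f s x ^ lam * heatP f t x ^ (1 - lam) := by
  set Ps := heatP f s x with hPsdef
  set Pt := heatP f t x with hPtdef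
  have key : ∀ y : ℝ, f y * (gK s (x - y) ^ lam * gK t (x - y) ^ (1 - lam))
      ≤ Ps ^ lam * Pt ^ (1 - lam)
        * (f y * (lam * (gK s (x - y) / Ps) + (1 - lam) * (gK t (x - y) / Pt))) := by
    intro y
    have h1 : gK s (x - y) ^ lam * gK t (x - y) ^ (1 - lam)
        = Ps ^ lam * Pt ^ (1 - lam)
          * ((gK s (x - y) / Ps) ^ lam * (gK t (x - y) / Pt) ^ (1 - lam)) := by
      rw [Real.div_rpow (gK_pos hs _).le hPs.le, Real.div_rpow (gK_pos ht _).le hPt.le]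
      field_simp
    have h2 : (gK s (x - y) / Ps) ^ lam * (gK t (x - y) / Pt) ^ (1 - lam)
        ≤ lam * (gK s (x - y) / Ps) + (1 - lam) * (gK t (x - y) / Pt) :=
      Real.geom_mean_le_arith_mean2_weighted hl0 (by linarith)
        (div_nonneg (gK_pos hs _).le hPs.le) (div_nonneg (gK_pos ht _).le hPt.le)
        (by ring)
    calc f y * (gK s (x - y) ^ lam * gK t (x - y) ^ (1 - lam))
        = Ps ^ lam * Pt ^ (1 - lam)
          * (f y * ((gK s (x - y) / Ps) ^ lam * (gK t (x - y) / Pt) ^ (1 - lam))) := by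
          rw [h1]; ring
      _ ≤ _ := by
          apply mul_le_mul_of_nonneg_left _
            (by positivity : (0:ℝ) ≤ Ps ^ lam * Pt ^ (1 - lam))
          exact mul_le_mul_of_nonneg_left h2 (hf0 y)
  have hint : Integrable (fun y : ℝ => Ps ^ lam * Pt ^ (1 - lam)
      * (f y * (lam * (gK s (x - y) / Ps) + (1 - lam) * (gK t (x - y) / Pt)))) := by
    apply Integrable.const_mul
    have : (fun y : ℝ => f y * (lam * (gK s (x - y) / Ps) + (1 - lam) * (gK t (x - y) / Pt)))
        = fun y : ℝ => (lam / Ps) * (f y * gK s (x - y))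
          + ((1 - lam) / Pt) * (f y * gK t (x - y)) := by
      funext y; ring
    rw [this]
    exact ((integrable_conv hfi hs x).const_mul _).add
      ((integrable_conv hfi ht x).const_mul _)
  calc ∫ y : ℝ, f y * (gK s (x - y) ^ lam * gK t (x - y) ^ (1 - lam))
      ≤ ∫ y : ℝ, Ps ^ lam * Pt ^ (1 - lam)
          * (f y * (lam * (gK s (x - y) / Ps) + (1 - lam) * (gK t (x - y) / Pt))) := by
        apply integral_mono_of_nonneg
        · exact Eventually.of_forall fun y =>
            mul_nonneg (hf0 y) (mul_nonneg (Real.rpow_nonneg (gK_pos hs _).le _)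
              (Real.rpow_nonneg (gK_pos ht _).le _))
        · exact hint
        · exact Eventually.of_forall key
    _ = Ps ^ lam * Pt ^ (1 - lam)
        * ((lam / Ps) * (∫ y : ℝ, f y * gK s (x - y))
          + ((1 - lam) / Pt) * (∫ y : ℝ, f y * gK t (x - y))) := by
        rw [integral_const_mul]
        congr 1
        have : (fun y : ℝ => f y * (lam * (gK s (x - y) / Ps) + (1 - lam) * (gK t (x - y) / Pt)))
            = fun y : ℝ => (lam / Ps) * (f y * gK s (x - y))
              + ((1 - lam) / Pt) * (f y * gK t (x - y)) := by
          funext y; ring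
        rw [this, integral_add (((integrable_conv hfi hs x).const_mul _))
          ((integrable_conv hfi ht x).const_mul _), integral_const_mul, integral_const_mul]
    _ = Ps ^ lam * Pt ^ (1 - lam) := by
        rw [← heatP_eq, ← heatP_eq, ← hPsdef, ← hPtdef]
        field_simp
        ring
  
/-- Key derivative bound, uniform over `t ∈ [a,b]`. -/
lemma pk_bound (hfm : Measurable f) (hf0 : ∀ x, 0 ≤ f x) (hf1 : (∫ x : ℝ, f x) = 1)
    {a b s lam : ℝ} (ha : 0 < a) (hab : a ≤ b) (hbs : b < s)
    (hl0 : 0 < lam) (hl1 : lam < 1) (m : ℕ) :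
    ∃ C : ℝ, 0 < C ∧ ∀ t ∈ Set.Icc a b, ∀ x : ℝ,
      |pk f m t x| ≤ C * (heatP f s x ^ lam * heatP f t x ^ (1 - lam)) := by
  have hfi : Integrable f := integrable_of_integral_one hf1
  obtain ⟨C, hC0, hC⟩ := kernel_compare ha hab hbs hl0 hl1 m
  refine ⟨C, hC0, fun t ht x => ?_⟩
  have ht0 : 0 < t := lt_of_lt_of_le ha ht.1
  have hb0 : 0 < b := lt_of_lt_of_le ha hab
  have hs0 : 0 < s := lt_trans hb0 hbs
  have hPt : 0 < heatP f t x := heatP_pos hfm hf0 hf1 ht0 x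
  have hPs : 0 < heatP f s x := heatP_pos hfm hf0 hf1 hs0 x
  have hintR : Integrable (fun y : ℝ =>
      f y * (C * (gK s (x - y) ^ lam * gK t (x - y) ^ (1 - lam)))) := by
    apply integrable_f_mul hfi
      (B := C * (((Real.sqrt (2 * Real.pi * s))⁻¹) ^ lam
        * ((Real.sqrt (2 * Real.pi * t))⁻¹) ^ (1 - lam)))
    · exact (measurable_const.mul (((measurable_gK_rpow hs0 lam).comp
        (measurable_const.sub measurable_id)).mul ((measurable_gK_rpow ht0 (1 - lam)).comp
        (measurable_const.sub measurable_id))))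
    · intro z
      rw [abs_of_nonneg (mul_nonneg hC0.le (mul_nonneg
        (Real.rpow_nonneg (gK_pos hs0 _).le _) (Real.rpow_nonneg (gK_pos ht0 _).le _)))]
      apply mul_le_mul_of_nonneg_left _ hC0.le
      exact mul_le_mul (gK_rpow_le hs0 hl0.le _) (gK_rpow_le ht0 (by linarith) _)
        (Real.rpow_nonneg (gK_pos ht0 _).le _)
        (Real.rpow_nonneg (inv_nonneg.2 (sqrt_two_pi_t_pos hs0).le) _)
  rw [pk_formula hfm hfi ht0 m x]
  calc |∫ y : ℝ, f y * ((Qp m t).eval (x - y) * gK t (x - y))|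
      ≤ ∫ y : ℝ, |f y * ((Qp m t).eval (x - y) * gK t (x - y))| := by
        simpa only [Real.norm_eq_abs] using
          norm_integral_le_integral_norm (μ := (volume : Measure ℝ))
            (fun y : ℝ => f y * ((Qp m t).eval (x - y) * gK t (x - y)))
    _ ≤ ∫ y : ℝ, f y * (C * (gK s (x - y) ^ lam * gK t (x - y) ^ (1 - lam))) := by
        apply integral_mono_of_nonneg (Eventually.of_forall fun y => abs_nonneg _) hintR
        apply Eventually.of_forall
        intro y
        show |f y * ((Qp m t).eval (x - y) * gK t (x - y))|
          ≤ f y * (C * (gK s (x - y) ^ lam * gK t (x - y) ^ (1 - lam)))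
        rw [abs_mul, abs_of_nonneg (hf0 y)]
        exact mul_le_mul_of_nonneg_left (hC t ht (x - y)) (hf0 y)
    _ = C * ∫ y : ℝ, f y * (gK s (x - y) ^ lam * gK t (x - y) ^ (1 - lam)) := by
        rw [← integral_const_mul]
        congr 1; funext y; ring
    _ ≤ C * (heatP f s x ^ lam * heatP f t x ^ (1 - lam)) := by
        apply mul_le_mul_of_nonneg_left _ hC0.le
        exact holder_conv hfm hf0 hfi ht0 hs0 hl0.le hl1.le hPt hPs

end Holder


section Tendsto

variable {f : ℝ → ℝ}

lemma gK_comp_tendsto_atTop {s : ℝ} (hs : 0 < s) (y : ℝ) :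
    Tendsto (fun x : ℝ => gK s (x - y)) atTop (nhds 0) := by
  have h1 : Tendsto (fun x : ℝ => x - y) atTop atTop :=
    tendsto_atTop_add_const_right atTop (-y) tendsto_id
  have h2 : Tendsto (fun x : ℝ => (x - y) ^ 2) atTop atTop :=
    (tendsto_pow_atTop (two_ne_zero)).comp h1
  have h3 : Tendsto (fun x : ℝ => -(x - y) ^ 2) atTop atBot :=
    tendsto_neg_atTop_atBot.comp h2
  have h4 : Tendsto (fun x : ℝ => -(x - y) ^ 2 / (2 * s)) atTop atBot :=
    h3.atBot_div_const (by linarith)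
  have h5 : Tendsto (fun x : ℝ => Real.exp (-(x - y) ^ 2 / (2 * s))) atTop (nhds 0) :=
    Real.tendsto_exp_atBot.comp h4
  have := h5.const_mul ((Real.sqrt (2 * Real.pi * s))⁻¹)
  simpa [gK_def, mul_zero] using this

lemma gK_comp_tendsto_atBot {s : ℝ} (hs : 0 < s) (y : ℝ) :
    Tendsto (fun x : ℝ => gK s (x - y)) atBot (nhds 0) := by
  have h1 : Tendsto (fun x : ℝ => x - y) atBot atBot :=
    tendsto_atBot_add_const_right atBot (-y) tendsto_id
  have h1' : Tendsto (fun x : ℝ => -(x - y)) atBot atTop :=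
    tendsto_neg_atBot_atTop.comp h1
  have h2 : Tendsto (fun x : ℝ => (x - y) ^ 2) atBot atTop := by
    have := (tendsto_pow_atTop (two_ne_zero)).comp h1'
    refine this.congr fun x => ?_
    simp only [Function.comp_apply, neg_sq]
  have h3 : Tendsto (fun x : ℝ => -(x - y) ^ 2) atBot atBot :=
    tendsto_neg_atTop_atBot.comp h2
  have h4 : Tendsto (fun x : ℝ => -(x - y) ^ 2 / (2 * s)) atBot atBot :=
    h3.atBot_div_const (by linarith)
  have h5 : Tendsto (fun x : ℝ => Real.exp (-(x - y) ^ 2 / (2 * s))) atBot (nhds 0) :=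
    Real.tendsto_exp_atBot.comp h4
  have := h5.const_mul ((Real.sqrt (2 * Real.pi * s))⁻¹)
  simpa [gK_def, mul_zero] using this

lemma heatP_tendsto_zero (hfm : Measurable f) (hfi : Integrable f)
    {s : ℝ} (hs : 0 < s) :
    Tendsto (fun x : ℝ => heatP f s x) (Filter.cocompact ℝ) (nhds 0) := by
  rw [cocompact_eq_atBot_atTop]
  have hmeas : ∀ x : ℝ, AEStronglyMeasurable (fun y : ℝ => f y * gK s (x - y))
      (volume : Measure ℝ) := by
    intro x
    exact (hfm.mul (((continuous_gK s).comp
      (continuous_const.sub continuous_id)).measurable)).aestronglyMeasurable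
  have hbd : ∀ x : ℝ, ∀ᵐ y : ℝ, ‖f y * gK s (x - y)‖
      ≤ |f y| * (Real.sqrt (2 * Real.pi * s))⁻¹ := by
    intro x
    apply Eventually.of_forall
    intro y
    rw [Real.norm_eq_abs, abs_mul]
    apply mul_le_mul_of_nonneg_left _ (abs_nonneg _)
    rw [abs_of_pos (gK_pos hs _)]
    exact gK_le hs _
  have hbint : Integrable (fun y : ℝ => |f y| * (Real.sqrt (2 * Real.pi * s))⁻¹) :=
    hfi.abs.mul_const _
  have hzero : (0 : ℝ) = ∫ _y : ℝ, (0 : ℝ) := by simp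
  rw [tendsto_sup]
  constructor
  · rw [show nhds (0:ℝ) = nhds (∫ _y : ℝ, (0:ℝ)) by simp]
    apply tendsto_integral_filter_of_dominated_convergence _ (Eventually.of_forall hmeas)
      (Eventually.of_forall hbd) hbint
    apply Eventually.of_forall
    intro y
    simpa using (gK_comp_tendsto_atBot hs y).const_mul (f y)
  · rw [show nhds (0:ℝ) = nhds (∫ _y : ℝ, (0:ℝ)) by simp]
    apply tendsto_integral_filter_of_dominated_convergence _ (Eventually.of_forall hmeas)
      (Eventually.of_forall hbd) hbint
    apply Eventually.of_forall
    intro y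
    simpa using (gK_comp_tendsto_atTop hs y).const_mul (f y)

end Tendsto

/-- Uniform domination of products of ratios of spatial derivatives of the heat-flow
density, and the resulting decay at infinity. -/
theorem heat_density_ratio_bound
    (f : ℝ → ℝ) (hfm : Measurable f) (hf0 : ∀ x, 0 ≤ f x)
    (hf1 : (∫ x : ℝ, f x) = 1)
    (α : ℝ) (hα : 0 < α)
    (r : ℕ) (hr : 0 < r) (n k : Fin r → ℕ)
    (hn : ∀ i, 0 < n i) (hk : ∀ i, 0 < k i)
    (a b ε : ℝ) (ha : 0 < a) (hab : a < b) (hε : 0 < ε) :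
    (∃ C : ℝ, ∀ t ∈ Set.Icc a b, ∀ x : ℝ,
      heatP f t x ^ α * ∏ i : Fin r, |pk f (n i) t x / heatP f t x| ^ (k i)
        ≤ C * heatP f (b + ε) x ^ α)
    ∧ ∀ t ∈ Set.Icc a b,
      Filter.Tendsto
        (fun x : ℝ =>
          heatP f t x ^ α * ∏ i : Fin r, (pk f (n i) t x / heatP f t x) ^ (k i))
        (Filter.cocompact ℝ) (nhds 0) := by
  have hfi : Integrable f := integrable_of_integral_one hf1
  set s := b + ε with hsdef
  have hb0 : 0 < b := lt_trans ha hab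
  have hbs : b < s := by rw [hsdef]; linarith
  have hs0 : 0 < s := by linarith
  set K : ℕ := ∑ i : Fin r, k i with hKdef
  have hK1 : 1 ≤ K := by
    have hpos : 0 < K := by
      have : Nonempty (Fin r) := Fin.pos_iff_nonempty.1 hr
      exact Finset.sum_pos (fun i _ => hk i) Finset.univ_nonempty
    omega
  have hKR : (1 : ℝ) ≤ (K : ℝ) := by exact_mod_cast hK1
  set lam := min α 1 / (2 * (K : ℝ)) with hlamdef
  have hmin0 : 0 < min α 1 := lt_min hα one_pos
  have hmin1 : min α 1 ≤ 1 := min_le_right _ _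
  have hminα : min α 1 ≤ α := min_le_left _ _
  have hlam0 : 0 < lam := div_pos hmin0 (by linarith)
  have hlam1 : lam < 1 := by
    rw [hlamdef, div_lt_one (by linarith)]
    linarith
  have hγeq : lam * (K : ℝ) = min α 1 / 2 := by
    rw [hlamdef]
    field_simp
  have hγα : lam * (K : ℝ) ≤ α := by rw [hγeq]; linarith
  have hγ0 : 0 < lam * (K : ℝ) := mul_pos hlam0 (by linarith)
  have hbd : ∀ i : Fin r, ∃ C : ℝ, 0 < C ∧ ∀ t ∈ Set.Icc a b, ∀ x : ℝ,
      |pk f (n i) t x| ≤ C * (heatP f s x ^ lam * heatP f t x ^ (1 - lam)) :=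
    fun i => pk_bound hfm hf0 hf1 ha hab.le hbs hlam0 hlam1 (n i)
  choose Cf hCf0 hCf using hbd
  set Cp := ∏ i : Fin r, (Cf i) ^ (k i) with hCp
  have hCp0 : 0 < Cp := Finset.prod_pos fun i _ => pow_pos (hCf0 i) _
  set c := Real.sqrt (2 * Real.pi * a) * (Real.sqrt (2 * Real.pi * s))⁻¹ with hcdef
  have hc0 : 0 < c := mul_pos (sqrt_two_pi_t_pos ha) (inv_pos.2 (sqrt_two_pi_t_pos hs0))
  set Cfin := Cp * (c⁻¹) ^ (α - lam * (K : ℝ)) with hCfin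
  have hCfin0 : 0 < Cfin := mul_pos hCp0 (Real.rpow_pos_of_pos (inv_pos.2 hc0) _)
  have main : ∀ t ∈ Set.Icc a b, ∀ x : ℝ,
      heatP f t x ^ α * ∏ i : Fin r, |pk f (n i) t x / heatP f t x| ^ (k i)
        ≤ Cfin * heatP f s x ^ α := by
    intro t ht x
    have ht0 : 0 < t := lt_of_lt_of_le ha ht.1
    have hPt : 0 < heatP f t x := heatP_pos hfm hf0 hf1 ht0 x
    have hPs : 0 < heatP f s x := heatP_pos hfm hf0 hf1 hs0 x
    set Pt := heatP f t x with hPtdef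
    set Ps := heatP f s x with hPsdef
    set w := Ps ^ lam * Pt ^ (-lam) with hw
    have hw0 : 0 < w := mul_pos (Real.rpow_pos_of_pos hPs _) (Real.rpow_pos_of_pos hPt _)
    have hfac : ∀ i : Fin r, |pk f (n i) t x / Pt| ≤ Cf i * w := by
      intro i
      rw [abs_div, abs_of_pos hPt, div_le_iff₀ hPt]
      have hsplit : Pt ^ (1 - lam) = Pt ^ (-lam) * Pt := by
        have h := Real.rpow_add hPt (-lam) 1
        rw [Real.rpow_one, show -lam + 1 = 1 - lam by ring] at h
        exact h
      calc |pk f (n i) t x| ≤ Cf i * (Ps ^ lam * Pt ^ (1 - lam)) := hCf i t ht x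
        _ = Cf i * w * Pt := by rw [hsplit, hw]; ring
    have hprod : ∏ i : Fin r, |pk f (n i) t x / Pt| ^ (k i) ≤ Cp * w ^ K := by
      calc ∏ i : Fin r, |pk f (n i) t x / Pt| ^ (k i)
          ≤ ∏ i : Fin r, (Cf i * w) ^ (k i) :=
            Finset.prod_le_prod (fun i _ => pow_nonneg (abs_nonneg _) _)
              (fun i _ => pow_le_pow_left₀ (abs_nonneg _) (hfac i) _)
        _ = (∏ i : Fin r, (Cf i) ^ (k i)) * ∏ i : Fin r, w ^ (k i) := by
            rw [← Finset.prod_mul_distrib]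
            apply Finset.prod_congr rfl
            intro i _
            rw [mul_pow]
        _ = Cp * w ^ K := by rw [Finset.prod_pow_eq_pow_sum, hCp]
    have hwK : w ^ K = Ps ^ (lam * (K : ℝ)) * Pt ^ (-(lam * (K : ℝ))) := by
      rw [hw, mul_pow, ← Real.rpow_natCast (Ps ^ lam) K, ← Real.rpow_natCast (Pt ^ (-lam)) K,
        ← Real.rpow_mul hPs.le, ← Real.rpow_mul hPt.le, neg_mul]
    have hcmp : Pt ≤ c⁻¹ * Ps := by
      have h := heatP_time_mono hf0 hfi ha ht.1 (le_trans ht.2 hbs.le) x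
      calc Pt = c⁻¹ * (c * Pt) := by field_simp
        _ ≤ c⁻¹ * Ps := mul_le_mul_of_nonneg_left h (inv_nonneg.2 hc0.le)
    have step4 : Pt ^ (α - lam * (K : ℝ)) ≤ (c⁻¹) ^ (α - lam * (K : ℝ))
        * Ps ^ (α - lam * (K : ℝ)) := by
      rw [← Real.mul_rpow (inv_nonneg.2 hc0.le) hPs.le]
      exact Real.rpow_le_rpow hPt.le hcmp (by linarith)
    calc Pt ^ α * ∏ i : Fin r, |pk f (n i) t x / Pt| ^ (k i)
        ≤ Pt ^ α * (Cp * w ^ K) :=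
          mul_le_mul_of_nonneg_left hprod (Real.rpow_nonneg hPt.le α)
      _ = Cp * Ps ^ (lam * (K : ℝ)) * (Pt ^ α * Pt ^ (-(lam * (K : ℝ)))) := by
          rw [hwK]; ring
      _ = Cp * Ps ^ (lam * (K : ℝ)) * Pt ^ (α - lam * (K : ℝ)) := by
          rw [← Real.rpow_add hPt]
          ring_nf
      _ ≤ Cp * Ps ^ (lam * (K : ℝ))
          * ((c⁻¹) ^ (α - lam * (K : ℝ)) * Ps ^ (α - lam * (K : ℝ))) := by
          apply mul_le_mul_of_nonneg_left step4
          exact mul_nonneg hCp0.le (Real.rpow_nonneg hPs.le _)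
      _ = Cfin * (Ps ^ (lam * (K : ℝ)) * Ps ^ (α - lam * (K : ℝ))) := by
          rw [hCfin]; ring
      _ = Cfin * Ps ^ α := by
          rw [← Real.rpow_add hPs]
          ring_nf
  refine ⟨⟨Cfin, main⟩, ?_⟩
  intro t ht
  have ht0 : 0 < t := lt_of_lt_of_le ha ht.1
  have hres : Tendsto (fun x : ℝ => heatP f s x ^ α) (Filter.cocompact ℝ) (nhds 0) := by
    have hcont : ContinuousAt (fun u : ℝ => u ^ α) 0 :=
      Real.continuousAt_rpow_const 0 α (Or.inr hα.le)
    have := hcont.tendsto.comp (heatP_tendsto_zero hfm hfi hs0)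
    simpa [Real.zero_rpow hα.ne', Function.comp_def] using this
  have hres2 : Tendsto (fun x : ℝ => Cfin * heatP f s x ^ α) (Filter.cocompact ℝ) (nhds 0) := by
    simpa using hres.const_mul Cfin
  apply squeeze_zero_norm _ hres2
  intro x
  have hPt : 0 < heatP f t x := heatP_pos hfm hf0 hf1 ht0 x
  rw [Real.norm_eq_abs, abs_mul, abs_of_nonneg (Real.rpow_nonneg hPt.le α), Finset.abs_prod]
  simp only [abs_pow]
  exact main t ht x
end
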